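/- arXiv:math/0010002 — 9 statements merged into one kernel-verified Lean document; each statement's English description precedes it below -/
import Mathlib

section
/- Fix an integer r ≥ 1 and, for each j with 1 ≤ j ≤ r, nonnegative integers α_{0,j}, β_{0,j} with α_{0,j} + β_{0,j} ≥ j. Let (ε_n)_{n≥0} be any sequence with ε_n ∈ {1,2}, and define recursively, for all j simultaneously, (α_{n+1,j}, β_{n+1,j}) = (α_{n,j} + β_{n,j}, β_{n,j}) if ε_n = 1, and (α_{n+1,j}, β_{n+1,j}) = (α_{n,j}, α_{n,j} + β_{n,j}) if ε_n = 2. For 1 ≤ i, j ≤ r set δ_{n,i,j} = (α_{n,i}/i − α_{n,j}/j)·(β_{n,i}/i − β_{n,j}/j) ∈ ℚ. Then for all n ≥ 0 and all 1 ≤ i, j ≤ r: (1) δ_{n+1,i,j} ≥ δ_{n,i,j}; and (2) if δ_{n,i,j} < 0 then δ_{n+1,i,j} − δ_{n,i,j} ≥ 1/r⁴. -/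
lemma aux_sq_lb (a b i j r : ℕ) (hi : 1 ≤ i) (hir : i ≤ r) (hj : 1 ≤ j) (hjr : j ≤ r)
    (h : ((a:ℚ)/i - (b:ℚ)/j) ≠ 0) : 1/(r:ℚ)^4 ≤ ((a:ℚ)/i - (b:ℚ)/j)^2 := by
  have hi' : (0:ℚ) < i := by exact_mod_cast hi
  have hj' : (0:ℚ) < j := by exact_mod_cast hj
  have hr' : (0:ℚ) < r := by exact_mod_cast le_trans hi hir
  have key : ((a:ℚ)/i - (b:ℚ)/j) = (((a:ℤ)*j - (b:ℤ)*i : ℤ) : ℚ) / ((i:ℚ)*(j:ℚ)) := by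
    push_cast
    field_simp
  set m : ℤ := (a:ℤ)*j - (b:ℤ)*i with hmdef
  have hm : m ≠ 0 := by
    intro h0
    apply h
    rw [key, h0]
    simp
  have hm1 : (1:ℚ) ≤ (m:ℚ)^2 := by
    have h1 : 1 ≤ |m| := Int.one_le_abs hm
    have h2 : (1:ℚ) ≤ |(m:ℚ)| := by rw [← Int.cast_abs]; exact_mod_cast h1
    nlinarith [abs_nonneg (m:ℚ), sq_abs (m:ℚ)]
  have hij : (i:ℚ)*(j:ℚ) ≤ (r:ℚ)^2 := by
    have : (i:ℚ) ≤ r := by exact_mod_cast hir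
    have : (j:ℚ) ≤ r := by exact_mod_cast hjr
    nlinarith
  rw [key, div_pow]
  rw [div_le_div_iff₀ (by positivity) (by positivity)]
  have hij2 : ((i:ℚ)*(j:ℚ))^2 ≤ (r:ℚ)^4 := by nlinarith [mul_pos hi' hj']
  nlinarith [mul_pos hi' hj']

/-- monotonicity of the products
`δ_{n,i,j} = (α_{n,i}/i − α_{n,j}/j)·(β_{n,i}/i − β_{n,j}/j)` under the
exponent recursion coming from quadratic transforms. -/
theorem delta_monotone_under_quadratic_transforms
    (r : ℕ) (hr : 1 ≤ r)
    (α β : ℕ → ℕ → ℕ)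
    (hinit : ∀ j, 1 ≤ j → j ≤ r → j ≤ α 0 j + β 0 j)
    (ε : ℕ → ℕ) (hε : ∀ n, ε n = 1 ∨ ε n = 2)
    (hrec1 : ∀ n j, 1 ≤ j → j ≤ r → ε n = 1 →
      α (n + 1) j = α n j + β n j ∧ β (n + 1) j = β n j)
    (hrec2 : ∀ n j, 1 ≤ j → j ≤ r → ε n = 2 →
      α (n + 1) j = α n j ∧ β (n + 1) j = α n j + β n j)
    (δ : ℕ → ℕ → ℕ → ℚ)
    (hδ : ∀ n i j, δ n i j =
      ((α n i : ℚ) / i - (α n j : ℚ) / j) * ((β n i : ℚ) / i - (β n j : ℚ) / j)) :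
    ∀ n i j, 1 ≤ i → i ≤ r → 1 ≤ j → j ≤ r →
      δ n i j ≤ δ (n + 1) i j ∧
      (δ n i j < 0 → 1 / (r : ℚ) ^ 4 ≤ δ (n + 1) i j - δ n i j) := by
  intro n i j hi hir hj hjr
  rcases hε n with h1 | h2
  · obtain ⟨hai, hbi⟩ := hrec1 n i hi hir h1
    obtain ⟨haj, hbj⟩ := hrec1 n j hj hjr h1
    have eq : δ (n+1) i j - δ n i j = ((β n i : ℚ)/i - (β n j : ℚ)/j)^2 := by
      rw [hδ (n+1) i j, hδ n i j, hai, haj, hbi, hbj]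
      push_cast
      ring
    constructor
    · nlinarith [sq_nonneg ((β n i : ℚ)/i - (β n j : ℚ)/j)]
    · intro hneg
      have hB : ((β n i : ℚ)/i - (β n j : ℚ)/j) ≠ 0 := by
        intro h0
        rw [hδ n i j, h0, mul_zero] at hneg
        exact lt_irrefl 0 hneg
      have := aux_sq_lb (β n i) (β n j) i j r hi hir hj hjr hB
      linarith [eq ▸ this]
  · obtain ⟨hai, hbi⟩ := hrec2 n i hi hir h2
    obtain ⟨haj, hbj⟩ := hrec2 n j hj hjr h2
    have eq : δ (n+1) i j - δ n i j = ((α n i : ℚ)/i - (α n j : ℚ)/j)^2 := by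
      rw [hδ (n+1) i j, hδ n i j, hai, haj, hbi, hbj]
      push_cast
      ring
    constructor
    · nlinarith [sq_nonneg ((α n i : ℚ)/i - (α n j : ℚ)/j)]
    · intro hneg
      have hA : ((α n i : ℚ)/i - (α n j : ℚ)/j) ≠ 0 := by
        intro h0
        rw [hδ n i j, h0, zero_mul] at hneg
        exact lt_irrefl 0 hneg
      have := aux_sq_lb (α n i) (α n j) i j r hi hir hj hjr hA
      linarith [eq ▸ this]
end

section
/- Fix an integer r ≥ 1 and, for each j with 1 ≤ j ≤ r, nonnegative integers α_{0,j}, β_{0,j} with α_{0,j} + β_{0,j} ≥ j. Let (ε_n)_{n≥0} be any sequence with ε_n ∈ {1,2}, and define recursively, for all j simultaneously, (α_{n+1,j}, β_{n+1,j}) = (α_{n,j} + β_{n,j}, β_{n,j}) if ε_n = 1, and (α_{n+1,j}, β_{n+1,j}) = (α_{n,j}, α_{n,j} + β_{n,j}) if ε_n = 2. Then: (1) there exist n₀ ≥ 0 and an index i with 1 ≤ i ≤ r such that for all n ≥ n₀ and all 1 ≤ j ≤ r one has α_{n,i}/i ≤ α_{n,j}/j and β_{n,i}/i ≤ β_{n,j}/j;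 and (2) there exists n₁ ≥ n₀ such that {α_{n₁,i}/i} + {β_{n₁,i}/i} < 1, where {t} = t − ⌊t⌋ denotes the fractional part of a rational number t. -/
/-- Comparability predicate: the normalized exponent vector of index `j` is
componentwise below that of index `k` at time `n` (cross-multiplied form). -/
private def QTCmp (α β : ℕ → ℕ → ℕ) (n j k : ℕ) : Prop :=
  k * α n j ≤ j * α n k ∧ k * β n j ≤ j * β n k

/-- Integer measure controlling the mixed-sign phase for the pair `(j,k)`. -/
private def QTMu (α β : ℕ → ℕ → ℕ) (j k n : ℕ) : ℕ :=
  (((k * α n j : ℕ) : ℤ) - ((j * α n k : ℕ) : ℤ)).natAbs +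
    (((k * β n j : ℕ) : ℤ) - ((j * β n k : ℕ) : ℤ)).natAbs

private lemma qtcmp_succ {r : ℕ} {α β : ℕ → ℕ → ℕ} {ε : ℕ → ℕ}
    (hε : ∀ n, ε n = 1 ∨ ε n = 2)
    (hrec1 : ∀ n j, 1 ≤ j → j ≤ r → ε n = 1 →
      α (n + 1) j = α n j + β n j ∧ β (n + 1) j = β n j)
    (hrec2 : ∀ n j, 1 ≤ j → j ≤ r → ε n = 2 →
      α (n + 1) j = α n j ∧ β (n + 1) j = α n j + β n j)
    {j k : ℕ} (hj1 : 1 ≤ j) (hjr : j ≤ r) (hk1 : 1 ≤ k) (hkr : k ≤ r)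
    (n : ℕ) (h : QTCmp α β n j k) : QTCmp α β (n + 1) j k := by
  rcases hε n with h1 | h2
  · obtain ⟨haj, hbj⟩ := hrec1 n j hj1 hjr h1
    obtain ⟨hak, hbk⟩ := hrec1 n k hk1 hkr h1
    refine ⟨?_, ?_⟩
    · rw [haj, hak, Nat.mul_add, Nat.mul_add]; exact Nat.add_le_add h.1 h.2
    · rw [hbj, hbk]; exact h.2
  · obtain ⟨haj, hbj⟩ := hrec2 n j hj1 hjr h2
    obtain ⟨hak, hbk⟩ := hrec2 n k hk1 hkr h2
    refine ⟨?_, ?_⟩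
    · rw [haj, hak]; exact h.1
    · rw [hbj, hbk, Nat.mul_add, Nat.mul_add]; exact Nat.add_le_add h.1 h.2

private lemma qtcmp_mono {r : ℕ} {α β : ℕ → ℕ → ℕ} {ε : ℕ → ℕ}
    (hε : ∀ n, ε n = 1 ∨ ε n = 2)
    (hrec1 : ∀ n j, 1 ≤ j → j ≤ r → ε n = 1 →
      α (n + 1) j = α n j + β n j ∧ β (n + 1) j = β n j)
    (hrec2 : ∀ n j, 1 ≤ j → j ≤ r → ε n = 2 →
      α (n + 1) j = α n j ∧ β (n + 1) j = α n j + β n j)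
    {j k : ℕ} (hj1 : 1 ≤ j) (hjr : j ≤ r) (hk1 : 1 ≤ k) (hkr : k ≤ r)
    {n m : ℕ} (hnm : n ≤ m) (h : QTCmp α β n j k) : QTCmp α β m j k := by
  induction m, hnm using Nat.le_induction with
  | base => exact h
  | succ m _ ih => exact qtcmp_succ hε hrec1 hrec2 hj1 hjr hk1 hkr m ih

private lemma qtcmp_exists {r : ℕ} {α β : ℕ → ℕ → ℕ} {ε : ℕ → ℕ}
    (hε : ∀ n, ε n = 1 ∨ ε n = 2)
    (hrec1 : ∀ n j, 1 ≤ j → j ≤ r → ε n = 1 →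
      α (n + 1) j = α n j + β n j ∧ β (n + 1) j = β n j)
    (hrec2 : ∀ n j, 1 ≤ j → j ≤ r → ε n = 2 →
      α (n + 1) j = α n j ∧ β (n + 1) j = α n j + β n j)
    {j k : ℕ} (hj1 : 1 ≤ j) (hjr : j ≤ r) (hk1 : 1 ≤ k) (hkr : k ≤ r) :
    ∃ N, QTCmp α β N j k ∨ QTCmp α β N k j := by
  have decr : ∀ n, ¬(QTCmp α β n j k ∨ QTCmp α β n k j) →
      ((QTCmp α β (n + 1) j k ∨ QTCmp α β (n + 1) k j) ∨
        QTMu α β j k (n + 1) < QTMu α β j k n) := by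
    intro n hn
    rcases hε n with h1 | h2
    · obtain ⟨haj, hbj⟩ := hrec1 n j hj1 hjr h1
      obtain ⟨hak, hbk⟩ := hrec1 n k hk1 hkr h1
      have eA : k * α (n + 1) j = k * α n j + k * β n j := by rw [haj, Nat.mul_add]
      have eB : j * α (n + 1) k = j * α n k + j * β n k := by rw [hak, Nat.mul_add]
      have eC : k * β (n + 1) j = k * β n j := by rw [hbj]
      have eD : j * β (n + 1) k = j * β n k := by rw [hbk]
      simp only [QTCmp, QTMu, eA, eB, eC, eD] at hn ⊢
      omega
    · obtain ⟨haj, hbj⟩ := hrec2 n j hj1 hjr h2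
      obtain ⟨hak, hbk⟩ := hrec2 n k hk1 hkr h2
      have eA : k * α (n + 1) j = k * α n j := by rw [haj]
      have eB : j * α (n + 1) k = j * α n k := by rw [hak]
      have eC : k * β (n + 1) j = k * β n j + k * α n j := by rw [hbj, Nat.mul_add, Nat.add_comm]
      have eD : j * β (n + 1) k = j * β n k + j * α n k := by rw [hbk, Nat.mul_add, Nat.add_comm]
      simp only [QTCmp, QTMu, eA, eB, eC, eD] at hn ⊢
      omega
  have main : ∀ M n, QTMu α β j k n ≤ M → ∃ N, QTCmp α β N j k ∨ QTCmp α β N k j := by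
    intro M
    induction M with
    | zero =>
      intro n h0
      by_cases hc : QTCmp α β n j k ∨ QTCmp α β n k j
      · exact ⟨n, hc⟩
      · rcases decr n hc with h | h
        · exact ⟨n + 1, h⟩
        · omega
    | succ M ih =>
      intro n hM
      by_cases hc : QTCmp α β n j k ∨ QTCmp α β n k j
      · exact ⟨n, hc⟩
      · rcases decr n hc with h | h
        · exact ⟨n + 1, h⟩
        · exact ih (n + 1) (by omega)
  exact main (QTMu α β j k 0) 0 le_rfl

private lemma qt_div_le_div (a b i j : ℕ) (hi : 0 < i) (hj : 0 < j) :
    ((a : ℚ) / i ≤ (b : ℚ) / j) ↔ j * a ≤ i * b := by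
  rw [div_le_div_iff₀ (by exact_mod_cast hi) (by exact_mod_cast hj)]
  rw [show ((a : ℚ) * j = ((j * a : ℕ) : ℚ)) by push_cast; ring,
    show ((b : ℚ) * i = ((i * b : ℕ) : ℚ)) by push_cast; ring]
  exact_mod_cast Iff.rfl

/-- stabilization of the normalized exponent vectors under the
exponent recursion coming from quadratic transforms, and smallness of the
fractional parts at some later stage. -/
theorem exponents_stabilize_under_quadratic_transforms
    (r : ℕ) (hr : 1 ≤ r)
    (α β : ℕ → ℕ → ℕ)
    (hinit : ∀ j, 1 ≤ j → j ≤ r → j ≤ α 0 j + β 0 j)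
    (ε : ℕ → ℕ) (hε : ∀ n, ε n = 1 ∨ ε n = 2)
    (hrec1 : ∀ n j, 1 ≤ j → j ≤ r → ε n = 1 →
      α (n + 1) j = α n j + β n j ∧ β (n + 1) j = β n j)
    (hrec2 : ∀ n j, 1 ≤ j → j ≤ r → ε n = 2 →
      α (n + 1) j = α n j ∧ β (n + 1) j = α n j + β n j) :
    ∃ n₀ i, 1 ≤ i ∧ i ≤ r ∧
      (∀ n, n₀ ≤ n → ∀ j, 1 ≤ j → j ≤ r →
        (α n i : ℚ) / i ≤ (α n j : ℚ) / j ∧ (β n i : ℚ) / i ≤ (β n j : ℚ) / j) ∧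
      ∃ n₁, n₀ ≤ n₁ ∧
        Int.fract ((α n₁ i : ℚ) / i) + Int.fract ((β n₁ i : ℚ) / i) < 1 := by
  classical
  -- all pairs are eventually comparable, simultaneously
  have hall : ∀ᶠ n in Filter.atTop, ∀ p ∈ Finset.Icc 1 r ×ˢ Finset.Icc 1 r,
      QTCmp α β n p.1 p.2 ∨ QTCmp α β n p.2 p.1 := by
    rw [Filter.eventually_all_finset]
    rintro ⟨j, k⟩ hp
    rw [Finset.mem_product, Finset.mem_Icc, Finset.mem_Icc] at hp
    obtain ⟨⟨hj1, hjr⟩, hk1, hkr⟩ := hp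
    obtain ⟨N, hN⟩ := qtcmp_exists hε hrec1 hrec2 hj1 hjr hk1 hkr
    rw [Filter.eventually_atTop]
    refine ⟨N, fun n hn => ?_⟩
    exact hN.imp (qtcmp_mono hε hrec1 hrec2 hj1 hjr hk1 hkr hn)
      (qtcmp_mono hε hrec1 hrec2 hk1 hkr hj1 hjr hn)
  obtain ⟨n₀, hn₀⟩ := Filter.eventually_atTop.1 hall
  -- pick an index minimizing the normalized total degree at time n₀
  obtain ⟨i, hi_mem, hi_min⟩ := Finset.exists_min_image (Finset.Icc 1 r)
    (fun j => (((α n₀ j + β n₀ j : ℕ) : ℚ)) / j)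
    ⟨1, Finset.mem_Icc.2 ⟨le_rfl, hr⟩⟩
  rw [Finset.mem_Icc] at hi_mem
  obtain ⟨hi1, hir⟩ := hi_mem
  have hi0 : (0 : ℚ) < (i : ℚ) := by exact_mod_cast hi1
  -- i is componentwise minimal at time n₀
  have hmin : ∀ j, 1 ≤ j → j ≤ r → QTCmp α β n₀ i j := by
    intro j hj1 hjr
    have hcomp := hn₀ n₀ le_rfl (i, j)
      (by rw [Finset.mem_product, Finset.mem_Icc, Finset.mem_Icc]
          exact ⟨⟨hi1, hir⟩, hj1, hjr⟩)
    have hcomp' : QTCmp α β n₀ i j ∨ QTCmp α β n₀ j i := hcomp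
    rcases hcomp' with h | h
    · exact h
    · obtain ⟨h1, h2⟩ := h
      have hg : (((α n₀ i + β n₀ i : ℕ) : ℚ)) / i ≤ (((α n₀ j + β n₀ j : ℕ) : ℚ)) / j :=
        hi_min j (Finset.mem_Icc.2 ⟨hj1, hjr⟩)
      have hg' : j * (α n₀ i + β n₀ i) ≤ i * (α n₀ j + β n₀ j) :=
        (qt_div_le_div _ _ _ _ hi1 hj1).1 hg
      rw [Nat.mul_add, Nat.mul_add] at hg'
      exact ⟨by omega, by omega⟩
  refine ⟨n₀, i, hi1, hir, ?_, ?_⟩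
  · intro n hn j hj1 hjr
    have hc : QTCmp α β n i j :=
      qtcmp_mono hε hrec1 hrec2 hi1 hir hj1 hjr hn (hmin j hj1 hjr)
    exact ⟨(qt_div_le_div _ _ _ _ hi1 hj1).2 hc.1, (qt_div_le_div _ _ _ _ hi1 hj1).2 hc.2⟩
  · -- Statement 2: fractional parts
    have hpart : ∃ n₁, n₀ ≤ n₁ ∧ α n₁ i % i + β n₁ i % i < i := by
      by_contra hcon
      push_neg at hcon
      have hdec : ∀ m, α (n₀ + m) i % i + β (n₀ + m) i % i + m ≤
          α n₀ i % i + β n₀ i % i := by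
        intro m
        induction m with
        | zero => simp
        | succ m ih =>
          have hge := hcon (n₀ + m) (by omega)
          have hmα : α (n₀ + m) i % i < i := Nat.mod_lt _ (by omega)
          have hmβ : β (n₀ + m) i % i < i := Nat.mod_lt _ (by omega)
          have hstep : α (n₀ + m + 1) i % i + β (n₀ + m + 1) i % i + 1 ≤
              α (n₀ + m) i % i + β (n₀ + m) i % i := by
            rcases hε (n₀ + m) with h1 | h2
            · obtain ⟨ha, hb⟩ := hrec1 (n₀ + m) i hi1 hir h1
              have e : α (n₀ + m + 1) i % i = α (n₀ + m) i % i + β (n₀ + m) i % i - i := by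
                rw [ha, Nat.add_mod, Nat.mod_eq_sub_mod hge]
                exact Nat.mod_eq_of_lt (by omega)
              rw [e, hb]
              omega
            · obtain ⟨ha, hb⟩ := hrec2 (n₀ + m) i hi1 hir h2
              have e : β (n₀ + m + 1) i % i = α (n₀ + m) i % i + β (n₀ + m) i % i - i := by
                rw [hb, Nat.add_mod, Nat.mod_eq_sub_mod hge]
                exact Nat.mod_eq_of_lt (by omega)
              rw [e, ha]
              omega
          have : n₀ + (m + 1) = n₀ + m + 1 := rfl
          rw [this]
          omega
      have h1 := hdec (α n₀ i % i + β n₀ i % i + 1)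
      have h2 := hcon (n₀ + (α n₀ i % i + β n₀ i % i + 1)) (by omega)
      omega
    obtain ⟨n₁, hn₁, hs⟩ := hpart
    refine ⟨n₁, hn₁, ?_⟩
    rw [Int.fract_div_natCast_eq_div_natCast_mod, Int.fract_div_natCast_eq_div_natCast_mod,
      ← add_div, div_lt_one hi0]
    exact_mod_cast hs
end

section
/- Fix an integer r ≥ 1. Suppose that for all n ≥ 0 and all j with 1 ≤ j ≤ r we are given pairs of nonnegative integers (α_{n,j}, β_{n,j}) such that for each n, either (α_{n+1,j}, β_{n+1,j}) = (α_{n,j} + β_{n,j} − j, β_{n,j}) for all j, or (α_{n+1,j}, β_{n+1,j}) = (α_{n,j}, α_{n,j} + β_{n,j} − j) for all j. For 1 ≤ i, j ≤ r set δ_{n,i,j} = (α_{n,i}/i − α_{n,j}/j)·(β_{n,i}/i − β_{n,j}/j) ∈ ℚ. Then for all n ≥ 0 and all 1 ≤ i, j ≤ r: (1) δ_{n+1,i,j} ≥ δ_{n,i,j}; and (2) if δ_{n,i,j} < 0 then δ_{n+1,i,j} − δ_{n,i,j} ≥ 1/r⁴. -/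
private lemma diff_sq_bound (r i j : ℕ) (hi1 : 1 ≤ i) (hir : i ≤ r)
    (hj1 : 1 ≤ j) (hjr : j ≤ r) (x y : ℤ)
    (hne : (x : ℚ) / i - (y : ℚ) / j ≠ 0) :
    1 / (r : ℚ) ^ 4 ≤ ((x : ℚ) / i - (y : ℚ) / j) ^ 2 := by
  have hi0 : (0:ℚ) < i := by exact_mod_cast hi1
  have hj0 : (0:ℚ) < j := by exact_mod_cast hj1
  have hr0 : (0:ℚ) < r := by exact_mod_cast hi1.trans hir
  set k : ℤ := j * x - i * y with hk
  have heq : (x : ℚ) / i - (y : ℚ) / j = (k : ℚ) / (i * j) := by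
    rw [hk]
    push_cast
    field_simp
  have hkne : k ≠ 0 := by
    intro h
    apply hne
    rw [heq, h]
    simp
  have hk1 : (1:ℚ) ≤ (k:ℚ)^2 := by
    have h1 : (1:ℤ) ≤ |k| := Int.one_le_abs hkne
    have : (1:ℤ) ≤ k^2 := by nlinarith [sq_abs k]
    exact_mod_cast this
  have hij : ((i:ℚ)*j)^2 ≤ (r:ℚ)^4 := by
    have h1 : (i:ℚ) ≤ r := by exact_mod_cast hir
    have h2 : (j:ℚ) ≤ r := by exact_mod_cast hjr
    have h3 : (i:ℚ)*j ≤ r*r := mul_le_mul h1 h2 hj0.le hr0.le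
    nlinarith [mul_pos hi0 hj0]
  rw [heq, div_pow]
  calc 1/(r:ℚ)^4 ≤ 1/((i:ℚ)*j)^2 := by
        apply one_div_le_one_div_of_le (by positivity) hij
    _ ≤ (k:ℚ)^2/((i:ℚ)*j)^2 := by gcongr

/-- monotonicity of the products
`δ_{n,i,j} = (α_{n,i}/i − α_{n,j}/j)·(β_{n,i}/i − β_{n,j}/j)` under the
exponent recursion `(α,β) ↦ (α+β−j, β)` or `(α,β) ↦ (α, α+β−j)`. -/
theorem delta_monotone_under_shifted_recursion
    (r : ℕ) (hr : 1 ≤ r)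
    (α β : ℕ → ℕ → ℤ)
    (hnonneg : ∀ n j, 1 ≤ j → j ≤ r → 0 ≤ α n j ∧ 0 ≤ β n j)
    (hrec : ∀ n,
      (∀ j, 1 ≤ j → j ≤ r →
        α (n + 1) j = α n j + β n j - (j : ℤ) ∧ β (n + 1) j = β n j) ∨
      (∀ j, 1 ≤ j → j ≤ r →
        α (n + 1) j = α n j ∧ β (n + 1) j = α n j + β n j - (j : ℤ)))
    (δ : ℕ → ℕ → ℕ → ℚ)
    (hδ : ∀ n i j, δ n i j =
      ((α n i : ℚ) / i - (α n j : ℚ) / j) * ((β n i : ℚ) / i - (β n j : ℚ) / j)) :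
    ∀ n i j, 1 ≤ i → i ≤ r → 1 ≤ j → j ≤ r →
      δ n i j ≤ δ (n + 1) i j ∧
      (δ n i j < 0 → 1 / (r : ℚ) ^ 4 ≤ δ (n + 1) i j - δ n i j) := by
  intro n i j hi1 hir hj1 hjr
  have hi0 : ((i:ℚ)) ≠ 0 := by
    have : (0:ℚ) < i := by exact_mod_cast hi1
    exact ne_of_gt this
  have hj0 : ((j:ℚ)) ≠ 0 := by
    have : (0:ℚ) < j := by exact_mod_cast hj1
    exact ne_of_gt this
  rcases hrec n with h | h
  · obtain ⟨hai, hbi⟩ := h i hi1 hir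
    obtain ⟨haj, hbj⟩ := h j hj1 hjr
    have hdiff : δ (n+1) i j - δ n i j =
        ((β n i : ℚ)/i - (β n j : ℚ)/j)^2 := by
      rw [hδ (n+1) i j, hδ n i j, hai, haj, hbi, hbj]
      push_cast
      field_simp
      ring
    constructor
    · nlinarith [sq_nonneg ((β n i : ℚ)/i - (β n j : ℚ)/j)]
    · intro hneg
      have hBne : ((β n i : ℚ)/i - (β n j : ℚ)/j) ≠ 0 := by
        intro h0
        rw [hδ n i j, h0, mul_zero] at hneg
        exact lt_irrefl 0 hneg
      rw [hdiff]
      exact diff_sq_bound r i j hi1 hir hj1 hjr (β n i) (β n j) hBne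
  · obtain ⟨hai, hbi⟩ := h i hi1 hir
    obtain ⟨haj, hbj⟩ := h j hj1 hjr
    have hdiff : δ (n+1) i j - δ n i j =
        ((α n i : ℚ)/i - (α n j : ℚ)/j)^2 := by
      rw [hδ (n+1) i j, hδ n i j, hai, haj, hbi, hbj]
      push_cast
      field_simp
      ring
    constructor
    · nlinarith [sq_nonneg ((α n i : ℚ)/i - (α n j : ℚ)/j)]
    · intro hneg
      have hAne : ((α n i : ℚ)/i - (α n j : ℚ)/j) ≠ 0 := by
        intro h0
        rw [hδ n i j, h0, zero_mul] at hneg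
        exact lt_irrefl 0 hneg
      rw [hdiff]
      exact diff_sq_bound r i j hi1 hir hj1 hjr (α n i) (α n j) hAne
end

section
/- Fix an integer r ≥ 1. Suppose that for all n ≥ 0 and all j with 1 ≤ j ≤ r we are given pairs of nonnegative integers (α_{n,j}, β_{n,j}) with α_{0,j} + β_{0,j} ≥ j, such that for each n, either (α_{n+1,j}, β_{n+1,j}) = (α_{n,j} + β_{n,j} − j, β_{n,j}) for all j, or (α_{n+1,j}, β_{n+1,j}) = (α_{n,j}, α_{n,j} + β_{n,j} − j) for all j. Then: (1) there exist n₀ ≥ 0 and an index i with 1 ≤ i ≤ r such that for all n ≥ n₀ and all 1 ≤ j ≤ r one has α_{n,i}/i ≤ α_{n,j}/j and β_{n,i}/i ≤ β_{n,j}/j; and (2) there exists n₁ ≥ n₀ such that {α_{n₁,i}/i} + {β_{n₁,i}/i} < 1, where {t} = t − ⌊t⌋ denotes the fractional part of a rational number t. -/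
/-- A pair of integer sequences evolving by `(d,e) ↦ (d+e,e)` or `(d,e) ↦ (d,d+e)`
eventually reaches a weakly same-signed state. -/
private lemma comp_exists (d e : ℕ → ℤ)
    (hstep : ∀ n, (d (n+1) = d n + e n ∧ e (n+1) = e n) ∨
                  (d (n+1) = d n ∧ e (n+1) = d n + e n)) :
    ∃ N, (0 ≤ d N ∧ 0 ≤ e N) ∨ (d N ≤ 0 ∧ e N ≤ 0) := by
  suffices h : ∀ m n, (d n).natAbs + (e n).natAbs ≤ m →
      ∃ N, (0 ≤ d N ∧ 0 ≤ e N) ∨ (d N ≤ 0 ∧ e N ≤ 0) from h _ 0 le_rfl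
  intro m
  induction m with
  | zero => intro n h; exact ⟨n, by omega⟩
  | succ m ih =>
    intro n h
    by_cases h1 : (0 ≤ d n ∧ 0 ≤ e n) ∨ (d n ≤ 0 ∧ e n ≤ 0)
    · exact ⟨n, h1⟩
    by_cases h2 : (0 ≤ d (n+1) ∧ 0 ≤ e (n+1)) ∨ (d (n+1) ≤ 0 ∧ e (n+1) ≤ 0)
    · exact ⟨n+1, h2⟩
    · exact ih (n+1) (by rcases hstep n with ⟨h3, h4⟩ | ⟨h3, h4⟩ <;> omega)

/-- A total transitive relation on `{1,…,r}` (r ≥ 1) has a bottom element. -/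
private lemma exists_bot (R : ℕ → ℕ → Prop) (r : ℕ) (hr : 1 ≤ r)
    (htot : ∀ j k, 1 ≤ j → j ≤ r → 1 ≤ k → k ≤ r → R j k ∨ R k j)
    (htrans : ∀ a b c, 1 ≤ a → a ≤ r → 1 ≤ b → b ≤ r → 1 ≤ c → c ≤ r →
      R a b → R b c → R a c) :
    ∃ i, 1 ≤ i ∧ i ≤ r ∧ ∀ j, 1 ≤ j → j ≤ r → R i j := by
  induction r with
  | zero => omega
  | succ r ih =>
    by_cases hr0 : 1 ≤ r
    · obtain ⟨i, hi1, hi2, hi⟩ := ih hr0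
        (fun j k hj hjr hk hkr => htot j k hj (by omega) hk (by omega))
        (fun a b c h1 h2 h3 h4 h5 h6 => htrans a b c h1 (by omega) h3 (by omega) h5 (by omega))
      rcases htot i (r+1) hi1 (by omega) (by omega) le_rfl with h | h
      · refine ⟨i, hi1, by omega, fun j hj hjr => ?_⟩
        rcases Nat.lt_or_ge j (r+1) with hj' | hj'
        · exact hi j hj (by omega)
        · have hje : j = r + 1 := by omega
          rw [hje]; exact h
      · refine ⟨r+1, by omega, le_rfl, fun j hj hjr => ?_⟩
        rcases Nat.lt_or_ge j (r+1) with hj' | hj'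
        · exact htrans (r+1) i j (by omega) le_rfl hi1 (by omega) hj (by omega) h
            (hi j hj (by omega))
        · have hje : j = r + 1 := by omega
          rw [hje]
          rcases htot (r+1) (r+1) (by omega) le_rfl (by omega) le_rfl with h' | h' <;> exact h'
    · have hre : r = 0 := by omega
      subst hre
      refine ⟨1, le_rfl, le_rfl, fun j hj hjr => ?_⟩
      have hje : j = 1 := by omega
      rw [hje]
      rcases htot 1 1 le_rfl le_rfl le_rfl le_rfl with h | h <;> exact h

/-- stabilization of the normalized exponent vectors under the
exponent recursion `(α,β) ↦ (α+β−j, β)` or `(α,β) ↦ (α, α+β−j)`, and smallness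
of the fractional parts at some later stage. -/
theorem exponents_stabilize_under_shifted_recursion
    (r : ℕ) (hr : 1 ≤ r)
    (α β : ℕ → ℕ → ℤ)
    (hnonneg : ∀ n j, 1 ≤ j → j ≤ r → 0 ≤ α n j ∧ 0 ≤ β n j)
    (hinit : ∀ j, 1 ≤ j → j ≤ r → (j : ℤ) ≤ α 0 j + β 0 j)
    (hrec : ∀ n,
      (∀ j, 1 ≤ j → j ≤ r →
        α (n + 1) j = α n j + β n j - (j : ℤ) ∧ β (n + 1) j = β n j) ∨
      (∀ j, 1 ≤ j → j ≤ r →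
        α (n + 1) j = α n j ∧ β (n + 1) j = α n j + β n j - (j : ℤ))) :
    ∃ n₀ i, 1 ≤ i ∧ i ≤ r ∧
      (∀ n, n₀ ≤ n → ∀ j, 1 ≤ j → j ≤ r →
        (α n i : ℚ) / i ≤ (α n j : ℚ) / j ∧ (β n i : ℚ) / i ≤ (β n j : ℚ) / j) ∧
      ∃ n₁, n₀ ≤ n₁ ∧
        Int.fract ((α n₁ i : ℚ) / i) + Int.fract ((β n₁ i : ℚ) / i) < 1 := by
  -- the normalized comparison relation (j ≼ k at time n)
  set Le : ℕ → ℕ → ℕ → Prop := fun n j k =>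
    (k : ℤ) * α n j ≤ (j : ℤ) * α n k ∧ (k : ℤ) * β n j ≤ (j : ℤ) * β n k with hLe
  -- one-step persistence of ≼
  have persist1 : ∀ n j k, 1 ≤ j → j ≤ r → 1 ≤ k → k ≤ r →
      Le n j k → Le (n+1) j k := by
    intro n j k hj hjr hk hkr ⟨h1, h2⟩
    rcases hrec n with h | h
    · obtain ⟨haj, hbj⟩ := h j hj hjr
      obtain ⟨hak, hbk⟩ := h k hk hkr
      exact ⟨by rw [haj, hak]; linarith, by rw [hbj, hbk]; linarith⟩
    · obtain ⟨haj, hbj⟩ := h j hj hjr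
      obtain ⟨hak, hbk⟩ := h k hk hkr
      exact ⟨by rw [haj, hak]; linarith, by rw [hbj, hbk]; linarith⟩
  have persist : ∀ m n j k, m ≤ n → 1 ≤ j → j ≤ r → 1 ≤ k → k ≤ r →
      Le m j k → Le n j k := by
    intro m n j k hmn hj hjr hk hkr hLejk
    induction n, hmn using Nat.le_induction with
    | base => exact hLejk
    | succ n hmn ih => exact persist1 n j k hj hjr hk hkr ih
  -- every pair eventually becomes comparable
  have comp : ∀ j k, 1 ≤ j → j ≤ r → 1 ≤ k → k ≤ r →
      ∃ N, Le N j k ∨ Le N k j := by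
    intro j k hj hjr hk hkr
    have hstep : ∀ n,
        ((j : ℤ) * α (n+1) k - (k : ℤ) * α (n+1) j =
           ((j : ℤ) * α n k - (k : ℤ) * α n j) + ((j : ℤ) * β n k - (k : ℤ) * β n j) ∧
         (j : ℤ) * β (n+1) k - (k : ℤ) * β (n+1) j =
           (j : ℤ) * β n k - (k : ℤ) * β n j) ∨
        ((j : ℤ) * α (n+1) k - (k : ℤ) * α (n+1) j =
           (j : ℤ) * α n k - (k : ℤ) * α n j ∧
         (j : ℤ) * β (n+1) k - (k : ℤ) * β (n+1) j =
           ((j : ℤ) * α n k - (k : ℤ) * α n j) + ((j : ℤ) * β n k - (k : ℤ) * β n j)) := by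
      intro n
      rcases hrec n with h | h
      · obtain ⟨haj, hbj⟩ := h j hj hjr
        obtain ⟨hak, hbk⟩ := h k hk hkr
        left
        constructor <;> simp only [haj, hbj, hak, hbk] <;> ring
      · obtain ⟨haj, hbj⟩ := h j hj hjr
        obtain ⟨hak, hbk⟩ := h k hk hkr
        right
        constructor <;> simp only [haj, hbj, hak, hbk] <;> ring
    obtain ⟨N, hN⟩ := comp_exists (fun n => (j : ℤ) * α n k - (k : ℤ) * α n j)
      (fun n => (j : ℤ) * β n k - (k : ℤ) * β n j) hstep
    refine ⟨N, ?_⟩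
    simp only [hLe]
    rcases hN with ⟨h1, h2⟩ | ⟨h1, h2⟩
    · left; constructor <;> [linarith [h1]; linarith [h2]]
    · right; constructor <;> [linarith [h1]; linarith [h2]]
  -- choose stabilization times and take a uniform one
  choose! f hf using comp
  set S : Finset (ℕ × ℕ) := (Finset.Icc 1 r) ×ˢ (Finset.Icc 1 r) with hS
  set n₀ : ℕ := S.sup (fun p => f p.1 p.2) with hn₀
  have htot₀ : ∀ j k, 1 ≤ j → j ≤ r → 1 ≤ k → k ≤ r → Le n₀ j k ∨ Le n₀ k j := by
    intro j k hj hjr hk hkr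
    have hmem : (j, k) ∈ S := by
      simp only [hS, Finset.mem_product, Finset.mem_Icc]; exact ⟨⟨hj, hjr⟩, ⟨hk, hkr⟩⟩
    have hle : f j k ≤ n₀ := Finset.le_sup (f := fun p => f p.1 p.2) hmem
    rcases hf j k hj hjr hk hkr with h | h
    · exact Or.inl (persist _ _ _ _ hle hj hjr hk hkr h)
    · exact Or.inr (persist _ _ _ _ hle hk hkr hj hjr h)
  -- transitivity of ≼ at time n₀
  have htrans₀ : ∀ a b c, 1 ≤ a → a ≤ r → 1 ≤ b → b ≤ r → 1 ≤ c → c ≤ r →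
      Le n₀ a b → Le n₀ b c → Le n₀ a c := by
    intro a b c ha har hb hbr hc hcr ⟨h1, h2⟩ ⟨h3, h4⟩
    have hb' : (0:ℤ) < (b:ℤ) := by exact_mod_cast hb
    have hc' : (0:ℤ) ≤ (c:ℤ) := by positivity
    have ha' : (0:ℤ) ≤ (a:ℤ) := by positivity
    constructor
    · have t1 := mul_le_mul_of_nonneg_left h1 hc'
      have t2 := mul_le_mul_of_nonneg_left h3 ha'
      have : (b:ℤ) * ((c:ℤ) * α n₀ a) ≤ (b:ℤ) * ((a:ℤ) * α n₀ c) := by ring_nf; ring_nf at t1 t2; linarith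
      exact le_of_mul_le_mul_left this hb'
    · have t1 := mul_le_mul_of_nonneg_left h2 hc'
      have t2 := mul_le_mul_of_nonneg_left h4 ha'
      have : (b:ℤ) * ((c:ℤ) * β n₀ a) ≤ (b:ℤ) * ((a:ℤ) * β n₀ c) := by ring_nf; ring_nf at t1 t2; linarith
      exact le_of_mul_le_mul_left this hb'
  obtain ⟨i, hi1, hi2, hi⟩ := exists_bot (Le n₀) r hr htot₀ htrans₀
  have hi' : (0:ℚ) < (i:ℚ) := by exact_mod_cast hi1
  have hiZ : (0:ℤ) < (i:ℤ) := by exact_mod_cast hi1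
  refine ⟨n₀, i, hi1, hi2, ?_, ?_⟩
  · -- part 1
    intro n hn j hj hjr
    have hLeij : Le n i j := persist n₀ n i j hn hi1 hi2 hj hjr (hi j hj hjr)
    obtain ⟨h1, h2⟩ := hLeij
    have hj' : (0:ℚ) < (j:ℚ) := by exact_mod_cast hj
    constructor
    · rw [div_le_div_iff₀ hi' hj']; exact_mod_cast mul_comm (j:ℤ) (α n i) ▸ h1.trans_eq (mul_comm _ _)
    · rw [div_le_div_iff₀ hi' hj']; exact_mod_cast mul_comm (j:ℤ) (β n i) ▸ h2.trans_eq (mul_comm _ _)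
  · -- part 2
    have gstep : ∀ n, (i:ℤ) ≤ α n i % i + β n i % i →
        α (n+1) i % i + β (n+1) i % i ≤ α n i % i + β n i % i - 1 := by
      intro n hg
      have hAm := Int.emod_nonneg (α n i) (by omega : (i:ℤ) ≠ 0)
      have hBm := Int.emod_nonneg (β n i) (by omega : (i:ℤ) ≠ 0)
      have hAl := Int.emod_lt_of_pos (α n i) hiZ
      have hBl := Int.emod_lt_of_pos (β n i) hiZ
      have hA := Int.mul_ediv_add_emod (α n i) (i:ℤ)
      have hB := Int.mul_ediv_add_emod (β n i) (i:ℤ)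
      rcases hrec n with h | h
      · obtain ⟨ha, hb⟩ := h i hi1 hi2
        have key : α (n+1) i = (α n i % i + β n i % i - i) + (i:ℤ) * (α n i / i + β n i / i) := by
          rw [ha]; linarith
        have e1 : α (n+1) i % i = α n i % i + β n i % i - i := by
          rw [key, Int.add_mul_emod_self_left]
          exact Int.emod_eq_of_lt (by omega) (by omega)
        rw [e1, hb]; omega
      · obtain ⟨ha, hb⟩ := h i hi1 hi2
        have key : β (n+1) i = (α n i % i + β n i % i - i) + (i:ℤ) * (α n i / i + β n i / i) := by
          rw [hb]; linarith
        have e1 : β (n+1) i % i = α n i % i + β n i % i - i := by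
          rw [key, Int.add_mul_emod_self_left]
          exact Int.emod_eq_of_lt (by omega) (by omega)
        rw [e1, ha]; omega
    have gdown : ∀ (m : ℕ) (n : ℕ), n₀ ≤ n → α n i % i + β n i % i ≤ (m:ℤ) →
        ∃ n₁, n₀ ≤ n₁ ∧ α n₁ i % i + β n₁ i % i < (i:ℤ) := by
      intro m
      induction m with
      | zero =>
        intro n hn h
        refine ⟨n, hn, ?_⟩
        have hAm := Int.emod_nonneg (α n i) (by omega : (i:ℤ) ≠ 0)
        have hBm := Int.emod_nonneg (β n i) (by omega : (i:ℤ) ≠ 0)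
        omega
      | succ m ih =>
        intro n hn h
        by_cases hcase : α n i % i + β n i % i < (i:ℤ)
        · exact ⟨n, hn, hcase⟩
        · push_neg at hcase
          have := gstep n hcase
          exact ih (n+1) (by omega) (by push_cast; push_cast at h; omega)
    obtain ⟨n₁, hn₁, hg⟩ := gdown (α n₀ i % i + β n₀ i % i).toNat n₀ le_rfl
      (Int.self_le_toNat _)
    refine ⟨n₁, hn₁, ?_⟩
    have fract_eq : ∀ A : ℤ, Int.fract ((A:ℚ)/(i:ℚ)) = ((A % i : ℤ):ℚ)/(i:ℚ) := by
      intro A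
      have hA := Int.mul_ediv_add_emod A (i:ℤ)
      have hsplit : (A:ℚ)/(i:ℚ) = ((A / (i:ℤ) : ℤ):ℚ) + ((A % i : ℤ):ℚ)/(i:ℚ) := by
        have hA' : (i:ℚ) * ((A / (i:ℤ) : ℤ):ℚ) + ((A % (i:ℤ) : ℤ):ℚ) = (A:ℚ) := by
          exact_mod_cast hA
        field_simp
        push_cast
        linarith [hA']
      rw [hsplit, Int.fract_intCast_add, Int.fract_eq_self.2 ⟨?_, ?_⟩]
      · exact div_nonneg (by exact_mod_cast Int.emod_nonneg A (by omega)) (le_of_lt hi')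
      · rw [div_lt_one hi']
        exact_mod_cast Int.emod_lt_of_pos A hiZ
    rw [fract_eq, fract_eq, ← add_div, div_lt_one hi']
    push_cast
    exact_mod_cast hg
  done
end

section
/- Let k be an algebraically closed field of characteristic zero, let u and v lie in the maximal ideal of k[[x,y]], and let φ be a quadratic substitution of k[[x,y]]. Then u and v are analytically independent if and only if φ(u) and φ(v) are analytically independent. -/
noncomputable section

/-- Substitution of the pair `(u, v)` into a two-variable power series `F`:
the coefficient of `F(u,v)` at a monomial `d` only involves the finitely many monomials
of `F` of total degree at most `|d|`, since `u` and `v` have zero constant term.  This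
realizes the value `F(u,v)` for `u, v` in the maximal ideal of `k[[x,y]]`. -/
def psEval {k : Type*} [Field k] (u v : MvPowerSeries (Fin 2) k)
    (F : MvPowerSeries (Fin 2) k) : MvPowerSeries (Fin 2) k :=
  fun d => ∑ e ∈ Finset.range (d 0 + d 1 + 1) ×ˢ Finset.range (d 0 + d 1 + 1),
    MvPowerSeries.coeff (R := k) (Finsupp.single 0 e.1 + Finsupp.single 1 e.2) F *
      MvPowerSeries.coeff (R := k) d (u ^ e.1 * v ^ e.2)

/-- `u` and `v` are analytically dependent if `F(u,v) = 0` for some nonzero two-variable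
formal power series `F`. -/
def AnalyticallyDependent {k : Type*} [Field k] (u v : MvPowerSeries (Fin 2) k) : Prop :=
  ∃ F : MvPowerSeries (Fin 2) k, F ≠ 0 ∧ psEval u v F = 0

/-- A `k`-algebra endomorphism of `k[[x,y]]` is coefficientwise continuous if the
coefficient of `φ F` at `d` depends only on the coefficients of `F` in total degree at
most `|d|`.  The substitution homomorphisms of power series rings have this property,
and such a homomorphism is determined by its values on `x` and `y`. -/
def CoeffCont {k : Type*} [Field k]
    (φ : MvPowerSeries (Fin 2) k →ₐ[k] MvPowerSeries (Fin 2) k) : Prop :=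
  ∀ (d : Fin 2 →₀ ℕ) (F G : MvPowerSeries (Fin 2) k),
    (∀ e : Fin 2 →₀ ℕ, e 0 + e 1 ≤ d 0 + d 1 →
      MvPowerSeries.coeff (R := k) e F = MvPowerSeries.coeff (R := k) e G) →
    MvPowerSeries.coeff (R := k) d (φ F) = MvPowerSeries.coeff (R := k) d (φ G)

/-- A quadratic substitution of `k[[x,y]]`: the (continuous) `k`-algebra homomorphism
determined by `x ↦ x, y ↦ x(y + c)` for some `c ∈ k`, or by `x ↦ xy, y ↦ y`. -/
def IsQuadSubst {k : Type*} [Field k]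
    (φ : MvPowerSeries (Fin 2) k →ₐ[k] MvPowerSeries (Fin 2) k) : Prop :=
  CoeffCont φ ∧
    ((∃ c : k, φ (MvPowerSeries.X 0) = MvPowerSeries.X 0 ∧
        φ (MvPowerSeries.X 1) =
          MvPowerSeries.X 0 * (MvPowerSeries.X 1 + MvPowerSeries.C (σ := Fin 2) (R := k) c)) ∨
      (φ (MvPowerSeries.X 0) = MvPowerSeries.X 0 * MvPowerSeries.X 1 ∧
        φ (MvPowerSeries.X 1) = MvPowerSeries.X 1))

namespace QSAux

open MvPowerSeries Finset

variable {k : Type*} [Field k]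

/-- The finitely supported function on `Fin 2` with values `a, b`. -/
abbrev σf (a b : ℕ) : Fin 2 →₀ ℕ := Finsupp.single 0 a + Finsupp.single 1 b

lemma σf_apply0 (a b : ℕ) : σf a b 0 = a := by simp

lemma σf_apply1 (a b : ℕ) : σf a b 1 = b := by simp [Finsupp.single_apply]

lemma eq_σf (d : Fin 2 →₀ ℕ) : d = σf (d 0) (d 1) := by
  ext i; fin_cases i <;> simp [Finsupp.single_apply]

lemma σf_inj {a b a' b' : ℕ} (h : σf a b = σf a' b') : a = a' ∧ b = b' := by
  constructor
  · have := congrArg (fun f => f 0) h; simpa using this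
  · have := congrArg (fun f => f 1) h; simpa [Finsupp.single_apply] using this

lemma X_pow_mul_X_pow (a b : ℕ) :
    (X 0 : MvPowerSeries (Fin 2) k) ^ a * X 1 ^ b = monomial (R := k) (σf a b) 1 := by
  rw [X_pow_eq, X_pow_eq, monomial_mul_monomial, one_mul]

/-- Order lemma: powers of a series with zero constant term have no low-degree terms. -/
lemma coeff_pow_eq_zero {u : MvPowerSeries (Fin 2) k}
    (hu : constantCoeff (σ := Fin 2) (R := k) u = 0) :
    ∀ (n : ℕ) (d : Fin 2 →₀ ℕ), d 0 + d 1 < n → coeff (R := k) d (u ^ n) = 0 := by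
  intro n
  induction n with
  | zero => intro d hd; omega
  | succ n ih =>
    intro d hd
    rw [pow_succ', coeff_mul]
    apply Finset.sum_eq_zero
    rintro ⟨p, q⟩ hpq
    rw [HasAntidiagonal.mem_antidiagonal] at hpq
    by_cases hp : p = 0
    · subst hp
      rw [coeff_zero_eq_constantCoeff, hu, zero_mul]
    · have hp1 : 1 ≤ p 0 + p 1 := by
        by_contra h
        push_neg at h
        apply hp
        rw [eq_σf p]
        have h0 : p 0 = 0 := by omega
        have h1 : p 1 = 0 := by omega
        rw [h0, h1]
        simp
      have e0 : p 0 + q 0 = d 0 := by rw [← Finsupp.add_apply, hpq]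
      have e1 : p 1 + q 1 = d 1 := by rw [← Finsupp.add_apply, hpq]
      rw [ih q (by omega), mul_zero]

lemma coeff_mul_pow_eq_zero {u v : MvPowerSeries (Fin 2) k}
    (hu : constantCoeff (σ := Fin 2) (R := k) u = 0) (hv : constantCoeff (σ := Fin 2) (R := k) v = 0)
    {a b : ℕ} {d : Fin 2 →₀ ℕ} (h : d 0 + d 1 < a + b) :
    coeff (R := k) d (u ^ a * v ^ b) = 0 := by
  rw [coeff_mul]
  apply Finset.sum_eq_zero
  rintro ⟨p, q⟩ hpq
  rw [HasAntidiagonal.mem_antidiagonal] at hpq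
  have e0 : p 0 + q 0 = d 0 := by rw [← Finsupp.add_apply, hpq]
  have e1 : p 1 + q 1 = d 1 := by rw [← Finsupp.add_apply, hpq]
  by_cases hpa : p 0 + p 1 < a
  · rw [coeff_pow_eq_zero hu a p hpa, zero_mul]
  · rw [coeff_pow_eq_zero hv b q (by omega), mul_zero]

/-- Truncated substitution sum. -/
def Qsum (u v : MvPowerSeries (Fin 2) k) (N : ℕ) (F : MvPowerSeries (Fin 2) k) :
    MvPowerSeries (Fin 2) k :=
  ∑ e ∈ Finset.range (N + 1) ×ˢ Finset.range (N + 1),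
    coeff (R := k) (σf e.1 e.2) F • (u ^ e.1 * v ^ e.2)

lemma coeff_psEval {u v F : MvPowerSeries (Fin 2) k} (d : Fin 2 →₀ ℕ) :
    coeff (R := k) d (psEval u v F) =
      ∑ e ∈ Finset.range (d 0 + d 1 + 1) ×ˢ Finset.range (d 0 + d 1 + 1),
        coeff (R := k) (σf e.1 e.2) F * coeff (R := k) d (u ^ e.1 * v ^ e.2) := rfl

lemma coeff_Qsum {u v F : MvPowerSeries (Fin 2) k} (N : ℕ) (d : Fin 2 →₀ ℕ) :
    coeff (R := k) d (Qsum u v N F) =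
      ∑ e ∈ Finset.range (N + 1) ×ˢ Finset.range (N + 1),
        coeff (R := k) (σf e.1 e.2) F * coeff (R := k) d (u ^ e.1 * v ^ e.2) := by
  rw [Qsum, map_sum]
  simp_rw [map_smul, smul_eq_mul]

/-- In degrees up to `N`, `psEval u v F` agrees with the finite sum `Qsum u v N F`. -/
lemma coeff_psEval_eq_Qsum {u v : MvPowerSeries (Fin 2) k}
    (hu : constantCoeff (σ := Fin 2) (R := k) u = 0) (hv : constantCoeff (σ := Fin 2) (R := k) v = 0)
    (F : MvPowerSeries (Fin 2) k) {N : ℕ} {d : Fin 2 →₀ ℕ} (hd : d 0 + d 1 ≤ N) :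
    coeff (R := k) d (psEval u v F) = coeff (R := k) d (Qsum u v N F) := by
  rw [coeff_psEval, coeff_Qsum]
  apply Finset.sum_subset
  · rintro ⟨a, b⟩ hab
    simp only [Finset.mem_product, Finset.mem_range] at hab ⊢
    omega
  · rintro ⟨a, b⟩ hab hnot
    simp only [Finset.mem_product, Finset.mem_range] at hab hnot
    rw [coeff_mul_pow_eq_zero hu hv (by omega), mul_zero]

lemma constantCoeff_apply {φ : MvPowerSeries (Fin 2) k →ₐ[k] MvPowerSeries (Fin 2) k}
    (hφc : CoeffCont φ) {u : MvPowerSeries (Fin 2) k}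
    (hu : constantCoeff (σ := Fin 2) (R := k) u = 0) : constantCoeff (σ := Fin 2) (R := k) (φ u) = 0 := by
  have h := hφc 0 u 0 ?_
  · rw [map_zero φ] at h
    rw [← coeff_zero_eq_constantCoeff, h, map_zero]
  · intro e he
    simp only [Finsupp.coe_zero, Pi.zero_apply] at he
    have h0 : e 0 = 0 := by omega
    have h1 : e 1 = 0 := by omega
    have : e = 0 := by rw [eq_σf e, h0, h1]; simp
    rw [this, coeff_zero_eq_constantCoeff, hu, map_zero]

/-- `φ` commutes with substitution. -/
lemma psEval_comm {φ : MvPowerSeries (Fin 2) k →ₐ[k] MvPowerSeries (Fin 2) k}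
    (hφc : CoeffCont φ) {u v : MvPowerSeries (Fin 2) k}
    (hu : constantCoeff (σ := Fin 2) (R := k) u = 0) (hv : constantCoeff (σ := Fin 2) (R := k) v = 0)
    (F : MvPowerSeries (Fin 2) k) :
    psEval (φ u) (φ v) F = φ (psEval u v F) := by
  have hu' := constantCoeff_apply hφc hu
  have hv' := constantCoeff_apply hφc hv
  ext d
  set N := d 0 + d 1 with hN
  have step1 : coeff (R := k) d (psEval (φ u) (φ v) F) = coeff (R := k) d (Qsum (φ u) (φ v) N F) :=
    coeff_psEval_eq_Qsum hu' hv' F le_rfl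
  have step2 : Qsum (φ u) (φ v) N F = φ (Qsum u v N F) := by
    rw [Qsum, Qsum, map_sum]
    apply Finset.sum_congr rfl
    rintro ⟨a, b⟩ _
    rw [map_smul, map_mul, map_pow, map_pow]
  have step3 : coeff (R := k) d (φ (Qsum u v N F)) = coeff (R := k) d (φ (psEval u v F)) := by
    apply hφc
    intro e he
    exact (coeff_psEval_eq_Qsum hu hv F he).symm
  rw [step1, step2, step3]

/-- Truncation of `F` as a finite sum of monomials. -/
def Tsum (N : ℕ) (F : MvPowerSeries (Fin 2) k) : MvPowerSeries (Fin 2) k :=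
  ∑ e ∈ Finset.range (N + 1) ×ˢ Finset.range (N + 1),
    coeff (R := k) (σf e.1 e.2) F • (X 0 ^ e.1 * X 1 ^ e.2 : MvPowerSeries (Fin 2) k)

lemma coeff_Tsum {F : MvPowerSeries (Fin 2) k} {N : ℕ} {e : Fin 2 →₀ ℕ}
    (he : e 0 + e 1 ≤ N) : coeff (R := k) e (Tsum N F) = coeff (R := k) e F := by
  rw [Tsum, map_sum]
  rw [Finset.sum_eq_single (e 0, e 1)]
  · rw [map_smul, X_pow_mul_X_pow, coeff_monomial, if_pos (eq_σf e), smul_eq_mul, mul_one]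
    exact congrArg (fun d => coeff (R := k) d F) (eq_σf e).symm
  · rintro ⟨a, b⟩ _ hne
    rw [map_smul, X_pow_mul_X_pow, coeff_monomial, if_neg, smul_zero]
    intro h
    obtain ⟨h1, h2⟩ := σf_inj ((eq_σf e).symm.trans h)
    exact hne (by rw [h1, h2])
  · intro h
    exact absurd (by simp only [Finset.mem_product, Finset.mem_range]; omega) h

lemma coeff_phi_eq_phi_Tsum {φ : MvPowerSeries (Fin 2) k →ₐ[k] MvPowerSeries (Fin 2) k}
    (hφc : CoeffCont φ) (F : MvPowerSeries (Fin 2) k) (d : Fin 2 →₀ ℕ) :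
    coeff (R := k) d (φ F) = coeff (R := k) d (φ (Tsum (d 0 + d 1) F)) := by
  apply hφc
  intro e he
  exact (coeff_Tsum he).symm

/-- Injectivity kernel lemma in the case `x ↦ xy, y ↦ y`. -/
lemma ker_case2 {φ : MvPowerSeries (Fin 2) k →ₐ[k] MvPowerSeries (Fin 2) k}
    (hφc : CoeffCont φ) (h0 : φ (X 0) = X 0 * X 1) (h1 : φ (X 1) = X 1)
    {F : MvPowerSeries (Fin 2) k} (hF : φ F = 0) : F = 0 := by
  ext e
  rw [map_zero]
  set a := e 0 with ha
  set b := e 1 with hb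
  set d : Fin 2 →₀ ℕ := σf a (a + b) with hd
  have hd0 : d 0 = a := σf_apply0 _ _
  have hd1 : d 1 = a + b := σf_apply1 _ _
  have key : coeff (R := k) d (φ F) = coeff (R := k) e F := by
    rw [coeff_phi_eq_phi_Tsum hφc F d, Tsum, map_sum, map_sum]
    rw [Finset.sum_eq_single (a, b)]
    · rw [map_smul, map_mul, map_pow, map_pow, h0, h1, mul_pow,
        mul_assoc, ← pow_add, X_pow_mul_X_pow, map_smul, coeff_monomial,
        if_pos, smul_eq_mul, mul_one]
      · exact congrArg (fun d' => coeff (R := k) d' F) (eq_σf e).symm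
      · exact hd
    · rintro ⟨p1, p2⟩ _ hne
      rw [map_smul, map_mul, map_pow, map_pow, h0, h1, mul_pow,
        mul_assoc, ← pow_add, X_pow_mul_X_pow, map_smul, coeff_monomial]
      rw [if_neg, smul_zero]
      intro hcontra
      obtain ⟨hc1, hc2⟩ := σf_inj (hd.symm.trans hcontra)
      refine hne ?_
      have hc1' : a = p1 := hc1
      have hc2' : a + b = p1 + p2 := hc2
      simp only [Prod.mk.injEq]
      omega
    · intro hcontra
      exact absurd (by
        simp only [Finset.mem_product, Finset.mem_range, hd0, hd1]; omega) hcontra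
  rw [hF, map_zero] at key
  exact key.symm

lemma expand1 (c : k) (a b : ℕ) :
    (X 0 : MvPowerSeries (Fin 2) k) ^ a * (X 0 * (X 1 + C (σ := Fin 2) (R := k) c)) ^ b
      = ∑ t ∈ Finset.range (b + 1),
          monomial (R := k) (σf (a + b) t) (c ^ (b - t) * (b.choose t : k)) := by
  rw [mul_pow, ← mul_assoc, ← pow_add, add_pow, Finset.mul_sum]
  apply Finset.sum_congr rfl
  intro t _
  rw [← map_pow, ← map_natCast (C (σ := Fin 2) (R := k)) (b.choose t),
    X_pow_eq, X_pow_eq, ← monomial_zero_eq_C_apply, ← monomial_zero_eq_C_apply,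
    monomial_mul_monomial, monomial_mul_monomial, monomial_mul_monomial]
  congr 1
  · simp [σf]
  · ring

lemma coeff_term1 (c : k) (n j a b : ℕ) :
    coeff (R := k) (σf n j) ((X 0 : MvPowerSeries (Fin 2) k) ^ a * (X 0 * (X 1 + C (σ := Fin 2) (R := k) c)) ^ b)
      = if a + b = n ∧ j ≤ b then c ^ (b - j) * (b.choose j : k) else 0 := by
  rw [expand1, map_sum]
  simp_rw [coeff_monomial]
  by_cases h : a + b = n ∧ j ≤ b
  · rw [if_pos h, Finset.sum_eq_single j]
    · rw [if_pos (by rw [h.1])]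
    · intro t _ hne
      rw [if_neg]
      intro hcon
      exact hne (σf_inj hcon).2.symm
    · intro hj
      exact absurd (Finset.mem_range.mpr (by omega)) hj
  · rw [if_neg h]
    apply Finset.sum_eq_zero
    intro t ht
    rw [if_neg]
    intro hcon
    obtain ⟨h1, h2⟩ := σf_inj hcon
    rw [Finset.mem_range] at ht
    exact h ⟨h1.symm, by omega⟩

lemma coeff_eq_zero_case1 {φ : MvPowerSeries (Fin 2) k →ₐ[k] MvPowerSeries (Fin 2) k}
    (hφc : CoeffCont φ) {c : k}
    (h0 : φ (X 0) = X 0) (h1 : φ (X 1) = X 0 * (X 1 + C (σ := Fin 2) (R := k) c))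
    {F : MvPowerSeries (Fin 2) k} (hF : φ F = 0) {n j : ℕ} (hj : j ≤ n)
    (H : ∀ p2, j < p2 → p2 ≤ n → coeff (R := k) (σf (n - p2) p2) F = 0) :
    coeff (R := k) (σf (n - j) j) F = 0 := by
  set d : Fin 2 →₀ ℕ := σf n j with hd
  have hd0 : d 0 = n := σf_apply0 _ _
  have hd1 : d 1 = j := σf_apply1 _ _
  have key : coeff (R := k) d (φ F) = coeff (R := k) (σf (n - j) j) F := by
    rw [coeff_phi_eq_phi_Tsum hφc F d, Tsum, map_sum, map_sum]
    simp_rw [map_smul, map_mul, map_pow, h0, h1, smul_eq_mul, hd, coeff_term1]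
    rw [Finset.sum_eq_single (n - j, j)]
    · have hcond : (n - j, j).1 + (n - j, j).2 = n ∧ j ≤ (n - j, j).2 :=
        ⟨by simp; omega, le_rfl⟩
      rw [if_pos hcond]
      have : (n - j, j).2 - j = 0 := by simp
      rw [this, pow_zero, one_mul]
      have : ((n - j, j).2).choose j = 1 := Nat.choose_self j
      rw [this, Nat.cast_one, mul_one]
    · rintro ⟨p1, p2⟩ hmem hne
      by_cases hcond : p1 + p2 = n ∧ j ≤ p2
      · obtain ⟨hsum, hle⟩ := hcond
        rcases eq_or_lt_of_le hle with heq | hlt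
        · exact absurd (by simp only [Prod.mk.injEq]; omega) hne
        · have hz : coeff (R := k) (σf p1 p2) F = 0 := by
            have := H p2 hlt (by omega)
            have hp1 : p1 = n - p2 := by omega
            rw [hp1]
            exact this
          rw [hz, zero_mul]
      · rw [if_neg hcond, mul_zero]
    · intro hcontra
      exact absurd (by
        simp only [Finset.mem_product, Finset.mem_range, hd0, hd1, σf_apply0, σf_apply1]
        omega) hcontra
  rw [hF, map_zero] at key
  exact key.symm

/-- Injectivity kernel lemma in the case `x ↦ x, y ↦ x(y+c)`. -/
lemma ker_case1 {φ : MvPowerSeries (Fin 2) k →ₐ[k] MvPowerSeries (Fin 2) k}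
    (hφc : CoeffCont φ) {c : k}
    (h0 : φ (X 0) = X 0) (h1 : φ (X 1) = X 0 * (X 1 + C (σ := Fin 2) (R := k) c))
    {F : MvPowerSeries (Fin 2) k} (hF : φ F = 0) : F = 0 := by
  have key : ∀ (i n j : ℕ), j ≤ n → n - j ≤ i → coeff (R := k) (σf (n - j) j) F = 0 := by
    intro i
    induction i with
    | zero =>
      intro n j hj hij
      exact coeff_eq_zero_case1 hφc h0 h1 hF hj (fun p2 h2 h2n => absurd h2n (by omega))
    | succ i ih =>
      intro n j hj hij
      apply coeff_eq_zero_case1 hφc h0 h1 hF hj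
      intro p2 h2 h2n
      exact ih n p2 h2n (by omega)
  ext e
  rw [map_zero]
  have h := key (e 0 + e 1) (e 0 + e 1) (e 1) (by omega) (by omega)
  rw [Nat.add_sub_cancel] at h
  rw [eq_σf e]
  exact h

end QSAux

/-- analytic independence is preserved (in both directions) by a quadratic
substitution of `k[[x,y]]`. -/
theorem analyticallyIndependent_iff_of_quadSubst
    (k : Type*) [Field k] [IsAlgClosed k] [CharZero k]
    (u v : MvPowerSeries (Fin 2) k)
    (hu : u ∈ IsLocalRing.maximalIdeal (MvPowerSeries (Fin 2) k))
    (hv : v ∈ IsLocalRing.maximalIdeal (MvPowerSeries (Fin 2) k))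
    (φ : MvPowerSeries (Fin 2) k →ₐ[k] MvPowerSeries (Fin 2) k)
    (hφ : IsQuadSubst φ) :
    (¬ AnalyticallyDependent u v) ↔ ¬ AnalyticallyDependent (φ u) (φ v) := by
  obtain ⟨hφc, hcase⟩ := hφ
  have hconst : ∀ w : MvPowerSeries (Fin 2) k,
      w ∈ IsLocalRing.maximalIdeal (MvPowerSeries (Fin 2) k) →
      MvPowerSeries.constantCoeff (σ := Fin 2) (R := k) w = 0 := by
    intro w hw
    rw [IsLocalRing.mem_maximalIdeal, mem_nonunits_iff] at hw
    by_contra h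
    exact hw (MvPowerSeries.isUnit_iff_constantCoeff.mpr (isUnit_iff_ne_zero.mpr h))
  have hu0 := hconst u hu
  have hv0 := hconst v hv
  have hker : ∀ F : MvPowerSeries (Fin 2) k, φ F = 0 → F = 0 := by
    rcases hcase with ⟨c, h0, h1⟩ | ⟨h0, h1⟩
    · exact fun F hF => QSAux.ker_case1 hφc h0 h1 hF
    · exact fun F hF => QSAux.ker_case2 hφc h0 h1 hF
  have hcomm : ∀ F : MvPowerSeries (Fin 2) k,
      psEval (φ u) (φ v) F = φ (psEval u v F) := QSAux.psEval_comm hφc hu0 hv0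
  constructor
  · intro h hdep
    apply h
    obtain ⟨F, hF, hF0⟩ := hdep
    refine ⟨F, hF, hker _ ?_⟩
    rw [← hcomm, hF0]
  · intro h hdep
    apply h
    obtain ⟨F, hF, hF0⟩ := hdep
    exact ⟨F, hF, by rw [hcomm, hF0, map_zero]⟩


end
end

section
/- Let k be a field of characteristic zero, let α ∈ k be nonzero, let λ ∈ ℚ, let r ≥ 0 be an integer, and let g ∈ k[t] be a nonzero polynomial of degree at most r. Let B(y) = Σ_{i≥0} C(λ, i)·α^{−i}·y^i ∈ k[[y]], where C(λ, i) = λ(λ−1)⋯(λ−i+1)/i! ∈ ℚ, so that B is the formal binomial expansion of (1 + y/α)^λ. If the product B(y)·g(y + α) ∈ k[[y]] is congruent to a constant modulo y^{r+2}, then −λ is an integer with 0 ≤ −λ ≤ r, and g(t) = e·t^{−λ} for some nonzero e ∈ k. -/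
noncomputable section

/-- The generalized binomial coefficient `C(λ, i) = λ(λ−1)⋯(λ−i+1)/i!` in `ℚ`. -/
def qBinom (l : ℚ) (i : ℕ) : ℚ := (∏ j ∈ Finset.range i, (l - (j : ℚ))) / (Nat.factorial i)

private lemma aeval_descPochhammer_eq_prod (l : ℚ) (i : ℕ) :
    (Polynomial.aeval l) (descPochhammer ℤ i) = ∏ j ∈ Finset.range i, (l - (j : ℚ)) := by
  induction i with
  | zero => simp
  | succ n ih =>
      rw [descPochhammer_succ_right, map_mul, ih, Finset.prod_range_succ]
      simp

private lemma qBinom_eq_choose (l : ℚ) (i : ℕ) : qBinom l i = Ring.choose l i := by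
  have h := Ring.descPochhammer_eq_factorial_smul_choose l i
  rw [← Polynomial.aeval_eq_smeval, aeval_descPochhammer_eq_prod] at h
  rw [qBinom, h, nsmul_eq_mul,
    mul_div_cancel_left₀ _ (by exact_mod_cast (Nat.factorial_ne_zero i))]

private lemma qBinom_zero (l : ℚ) : qBinom l 0 = 1 := by simp [qBinom]

private lemma qBinom_vandermonde (l : ℚ) (M : ℕ) (hM : M ≠ 0) :
    ∑ ij ∈ Finset.HasAntidiagonal.antidiagonal M, qBinom l ij.1 * qBinom (-l) ij.2 = 0 := by
  simp only [qBinom_eq_choose]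
  rw [← Ring.add_choose_eq M (Commute.all _ _), add_neg_cancel]
  obtain ⟨m, rfl⟩ := Nat.exists_eq_succ_of_ne_zero hM
  exact Ring.choose_zero_succ ℚ m

private lemma qBinom_natCast (n : ℕ) (m : ℕ) : qBinom (n : ℚ) m = (n.choose m : ℚ) := by
  rw [qBinom_eq_choose, Ring.choose_natCast]

/-- if the formal binomial series `B(y) = (1 + y/α)^λ` multiplied by
`g(y + α)` is congruent to a constant modulo `y^{r+2}`, where `g` is a nonzero polynomial
of degree at most `r`, then `−λ ∈ {0, 1, …, r}` and `g(t) = e t^{−λ}` for some `e ≠ 0`. -/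
theorem binomial_series_times_polynomial_constant
    (k : Type*) [Field k] [CharZero k]
    (α : k) (hα : α ≠ 0) (l : ℚ) (r : ℕ)
    (g : Polynomial k) (hg : g ≠ 0) (hdeg : g.natDegree ≤ r)
    (B : PowerSeries k)
    (hB : B = PowerSeries.mk fun i => ((qBinom l i : ℚ) : k) * α⁻¹ ^ i)
    (hconst : ∀ i : ℕ, 1 ≤ i → i ≤ r + 1 →
      PowerSeries.coeff (R := k) i
        (B * Polynomial.aeval (PowerSeries.X + PowerSeries.C (R := k) α) g) = 0) :
    ∃ n : ℕ, l = -(n : ℚ) ∧ n ≤ r ∧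
      ∃ e : k, e ≠ 0 ∧ g = Polynomial.C e * Polynomial.X ^ n := by
  classical
  set G : Polynomial k := g.comp (Polynomial.X + Polynomial.C α) with hG
  have hGg : G.comp (Polynomial.X - Polynomial.C α) = g := by
    rw [hG, Polynomial.comp_assoc]
    simp [Polynomial.add_comp, sub_add_cancel]
  -- identify the power series with the coercion of G
  have hcoe : (Polynomial.aeval (PowerSeries.X + PowerSeries.C (R := k) α) g : PowerSeries k)
      = (G : PowerSeries k) := by
    have h1 : (PowerSeries.X + PowerSeries.C (R := k) α)
        = (Polynomial.coeToPowerSeries.algHom k) (Polynomial.X + Polynomial.C α) := by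
      simp [Polynomial.coeToPowerSeries.algHom_apply, Polynomial.coe_add, Polynomial.coe_X,
        Polynomial.coe_C, PowerSeries.map_id]
    rw [h1, Polynomial.aeval_algHom_apply, hG, Polynomial.comp_eq_aeval]
    rfl
  have hc : ∀ i : ℕ, 1 ≤ i → i ≤ r + 1 →
      ∑ p ∈ Finset.HasAntidiagonal.antidiagonal i,
        ((qBinom l p.1 : ℚ) : k) * α⁻¹ ^ p.1 * G.coeff p.2 = 0 := by
    intro i h1 h2
    have := hconst i h1 h2
    rw [hcoe, PowerSeries.coeff_mul, hB] at this
    simpa [PowerSeries.coeff_mk, Polynomial.coeff_coe] using this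
  -- key recursion
  have key : ∀ m, m ≤ r + 1 → G.coeff m
      = G.coeff 0 * ((qBinom (-l) m : ℚ) : k) * α⁻¹ ^ m := by
    intro m
    induction m using Nat.strong_induction_on with
    | _ m ih =>
      match m with
      | 0 => intro _; simp [qBinom_zero]
      | (m+1) =>
        intro hm
        have h1 := hc (m+1) (by omega) hm
        rw [Finset.Nat.sum_antidiagonal_eq_sum_range_succ_mk, Finset.sum_range_succ'] at h1
        have h2 : ∀ j ∈ Finset.range (m+1),
            ((qBinom l (j+1) : ℚ) : k) * α⁻¹ ^ (j+1) * G.coeff (m+1-(j+1))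
            = G.coeff 0 * α⁻¹ ^ (m+1)
              * (((qBinom l (j+1) * qBinom (-l) (m-j) : ℚ)) : k) := by
          intro j hj
          rw [Finset.mem_range] at hj
          rw [show m+1-(j+1) = m - j by omega, ih (m-j) (by omega) (by omega)]
          have hx : α⁻¹ ^ (j+1) * α⁻¹ ^ (m-j) = α⁻¹ ^ (m+1) := by
            rw [← pow_add]; congr 1; omega
          push_cast
          linear_combination
            ((qBinom l (j+1) : ℚ) : k) * G.coeff 0 * ((qBinom (-l) (m-j) : ℚ) : k) * hx
        rw [Finset.sum_congr rfl h2] at h1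
        have hS : ∑ j ∈ Finset.range (m+1), qBinom l (j+1) * qBinom (-l) (m-j)
            = -qBinom (-l) (m+1) := by
          have hv := qBinom_vandermonde l (m+1) (Nat.succ_ne_zero m)
          rw [Finset.Nat.sum_antidiagonal_eq_sum_range_succ_mk, Finset.sum_range_succ'] at hv
          simp only [Nat.succ_sub_succ_eq_sub, qBinom_zero, one_mul, Nat.sub_zero] at hv
          linarith
        have hsum : ∑ j ∈ Finset.range (m+1),
            G.coeff 0 * α⁻¹ ^ (m+1) * (((qBinom l (j+1) * qBinom (-l) (m-j) : ℚ)) : k)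
            = G.coeff 0 * α⁻¹ ^ (m+1) * ((-qBinom (-l) (m+1) : ℚ) : k) := by
          rw [← Finset.mul_sum, ← Rat.cast_sum, hS]
        rw [hsum] at h1
        simp only [qBinom_zero, Rat.cast_one, one_mul, pow_zero] at h1
        push_cast at h1 ⊢
        linear_combination h1
  -- degree facts
  have hdegG : G.natDegree ≤ r := by
    rw [hG, Polynomial.natDegree_comp, Polynomial.natDegree_X_add_C, mul_one]
    exact hdeg
  have hGne : G ≠ 0 := fun h => hg (by rw [← hGg, h, Polynomial.zero_comp])
  have hG0ne : G.coeff 0 ≠ 0 := by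
    intro h0
    apply hGne
    rw [Polynomial.ext_iff]
    intro m
    rw [Polynomial.coeff_zero]
    by_cases hm : m ≤ r + 1
    · rw [key m hm, h0, zero_mul, zero_mul]
    · exact Polynomial.coeff_eq_zero_of_natDegree_lt (by omega)
  have htop : G.coeff (r+1) = 0 :=
    Polynomial.coeff_eq_zero_of_natDegree_lt (by omega)
  have hq0 : qBinom (-l) (r+1) = 0 := by
    have h1 := key (r+1) le_rfl
    rw [htop] at h1
    have h2 : ((qBinom (-l) (r+1) : ℚ) : k) = 0 := by
      have hαi : α⁻¹ ^ (r+1) ≠ 0 := pow_ne_zero _ (inv_ne_zero hα)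
      rcases mul_eq_zero.mp h1.symm with h | h
      · rcases mul_eq_zero.mp h with h' | h'
        · exact absurd h' hG0ne
        · exact h'
      · exact absurd h hαi
    exact_mod_cast h2
  -- extract n
  rw [qBinom, div_eq_zero_iff] at hq0
  have hq0' : ∏ j ∈ Finset.range (r+1), (-l - (j:ℚ)) = 0 := by
    rcases hq0 with h | h
    · exact h
    · exact absurd h (by exact_mod_cast (Nat.factorial_ne_zero (r+1)))
  obtain ⟨n, hn, hln⟩ := Finset.prod_eq_zero_iff.mp hq0'
  rw [Finset.mem_range] at hn
  have hl : l = -(n : ℚ) := by linarith [hln]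
  have hql : ∀ m : ℕ, ((qBinom (-l) m : ℚ) : k) = ((n.choose m : ℕ) : k) := by
    intro m
    rw [show -l = (n : ℚ) by linarith [hln], qBinom_natCast]
    push_cast
    ring
  refine ⟨n, hl, by omega, G.coeff 0 * α⁻¹ ^ n,
    mul_ne_zero hG0ne (pow_ne_zero _ (inv_ne_zero hα)), ?_⟩
  have hGT : G = Polynomial.C (G.coeff 0 * α⁻¹ ^ n) * (Polynomial.X + Polynomial.C α) ^ n := by
    rw [Polynomial.ext_iff]
    intro m
    rw [Polynomial.coeff_C_mul, Polynomial.coeff_X_add_C_pow]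
    by_cases hm : m ≤ r + 1
    · rw [key m hm, hql]
      by_cases hmn : m ≤ n
      · have hx : α⁻¹ ^ n * α ^ (n-m) = α⁻¹ ^ m := by
          have h2 : (α⁻¹ : k) ^ n = α⁻¹ ^ (n-m) * α⁻¹ ^ m := by
            rw [← pow_add]; congr 1; omega
          have h3 : α⁻¹ ^ (n-m) * α ^ (n-m) = 1 := by
            rw [← mul_pow, inv_mul_cancel₀ hα, one_pow]
          rw [h2, mul_comm (α⁻¹ ^ (n-m)) (α⁻¹ ^ m), mul_assoc, h3, mul_one]
        linear_combination -(G.coeff 0 * ((n.choose m : ℕ) : k)) * hx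
      · rw [Nat.choose_eq_zero_of_lt (by omega)]
        push_cast
        ring
    · rw [Polynomial.coeff_eq_zero_of_natDegree_lt (show G.natDegree < m by omega),
        Nat.choose_eq_zero_of_lt (by omega)]
      push_cast
      ring
  conv_lhs => rw [← hGg, hGT]
  rw [Polynomial.mul_comp, Polynomial.C_comp, Polynomial.pow_comp,
    Polynomial.add_comp, Polynomial.X_comp, Polynomial.C_comp, sub_add_cancel]

end
end

section
/- Let k be a field of characteristic zero and r ≥ 2 an integer. Let F ∈ k[y][[x,z]] be a formal power series in x and z whose coefficients are polynomials in y over k, and suppose that the coefficient of x^i y^0 z^0 in F is zero for every i ≥ 0. Suppose that there are infinitely many α ∈ k such that, denoting by F_α the series obtained from F by substituting y + α for y, the coefficient of x^i y^j z^k in F_α is zero whenever j + k > 0 and i + j + k < r. Write F = a_r + a_{r−1}·z + ⋯ + a_1·z^{r−1} + G·z^r, where a_i ∈ k[y][[x]] is the coefficient of z^{r−i} for 1 ≤ i ≤ r and G ∈ k[y][[x,z]]. Then x^i divides a_i for 1 ≤ i ≤ r − 1, and x^{r−1} divides a_r. -/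
noncomputable section

lemma aux_eval_shift {k : Type*} [CommRing k] (p : Polynomial k) (α : k) :
    ((Polynomial.aeval (R := k) (Polynomial.X + Polynomial.C α)).toRingHom p).coeff 0
      = p.eval α := by
  have : (Polynomial.aeval (R := k) (Polynomial.X + Polynomial.C α)) p
      = p.comp (Polynomial.X + Polynomial.C α) := by
    simp [Polynomial.aeval_def, Polynomial.comp, Polynomial.eval₂_def,
      Polynomial.algebraMap_eq]
  simp only [AlgHom.toRingHom_eq_coe, RingHom.coe_coe, this,
    Polynomial.coeff_zero_eq_eval_zero, Polynomial.eval_comp]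
  simp

lemma aux_deriv_shift {k : Type*} [CommRing k] (p : Polynomial k) (α : k) :
    ((Polynomial.aeval (R := k) (Polynomial.X + Polynomial.C α)).toRingHom p).coeff 1
      = p.derivative.eval α := by
  have h : (Polynomial.aeval (R := k) (Polynomial.X + Polynomial.C α)) p
      = p.comp (Polynomial.X + Polynomial.C α) := by
    simp [Polynomial.aeval_def, Polynomial.comp, Polynomial.eval₂_def,
      Polynomial.algebraMap_eq]
  have h1 : (p.comp (Polynomial.X + Polynomial.C α)).derivative
      = p.derivative.comp (Polynomial.X + Polynomial.C α) := by
    rw [Polynomial.derivative_comp]; simp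
  have h2 : (p.comp (Polynomial.X + Polynomial.C α)).coeff 1
      = (p.comp (Polynomial.X + Polynomial.C α)).derivative.eval 0 := by
    rw [← Polynomial.coeff_zero_eq_eval_zero, Polynomial.coeff_derivative]
    ring
  simp only [AlgHom.toRingHom_eq_coe, RingHom.coe_coe, h, h2, h1,
    Polynomial.eval_comp]
  simp

/-- let `F ∈ k[y][[x,z]]` (a power series in `x, z` with coefficients which
are polynomials in `y`), with no monomials which are pure powers of `x`.  If for
infinitely many `α ∈ k` the series obtained by substituting `y + α` for `y` has vanishing
`x^i y^j z^k`-coefficient whenever `j + k > 0` and `i + j + k < r`, then writing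
`F = a_r + a_{r−1} z + ⋯ + a_1 z^{r−1} + G z^r`, one has `x^i ∣ a_i` for `1 ≤ i ≤ r−1`
and `x^{r−1} ∣ a_r`.  (Here the power series variables are indexed by `0 ↦ x` and
`1 ↦ z`.) -/
theorem one_point_form_along_curve
    (k : Type*) [Field k] [CharZero k]
    (r : ℕ) (hr : 2 ≤ r)
    (F : MvPowerSeries (Fin 2) (Polynomial k))
    (h0 : ∀ i : ℕ,
      (MvPowerSeries.coeff (R := Polynomial k) (Finsupp.single 0 i) F).coeff 0 = 0)
    (hinf : {α : k | ∀ i j kk : ℕ, 0 < j + kk → i + j + kk < r →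
      (MvPowerSeries.coeff (R := Polynomial k) (Finsupp.single 0 i + Finsupp.single 1 kk)
        (MvPowerSeries.map (σ := Fin 2)
          ((Polynomial.aeval (R := k) (Polynomial.X + Polynomial.C α)).toRingHom)
          F)).coeff j = 0}.Infinite) :
    (∀ i : ℕ, 1 ≤ i → i ≤ r - 1 → ∀ s : ℕ, s < i →
      MvPowerSeries.coeff (R := Polynomial k)
        (Finsupp.single 0 s + Finsupp.single 1 (r - i)) F = 0) ∧
    (∀ s : ℕ, s < r - 1 →
      MvPowerSeries.coeff (R := Polynomial k) (Finsupp.single 0 s) F = 0) := by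
  constructor
  · intro i hi1 hi2 s hs
    set p := MvPowerSeries.coeff (R := Polynomial k)
      (Finsupp.single 0 s + Finsupp.single 1 (r - i)) F with hp
    have hroots : {α : k | p.IsRoot α}.Infinite := by
      apply hinf.mono
      intro α hα
      have h1 : 0 < 0 + (r - i) := by omega
      have h2 : s + 0 + (r - i) < r := by omega
      have := hα s 0 (r - i) h1 h2
      rw [MvPowerSeries.coeff_map, aux_eval_shift] at this
      exact this
    exact Polynomial.eq_zero_of_infinite_isRoot p hroots
  · intro s hs
    set p := MvPowerSeries.coeff (R := Polynomial k) (Finsupp.single 0 s) F with hp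
    have hroots : {α : k | p.derivative.IsRoot α}.Infinite := by
      apply hinf.mono
      intro α hα
      have h1 : 0 < 1 + 0 := by omega
      have h2 : s + 1 + 0 < r := by omega
      have := hα s 1 0 h1 h2
      rw [Finsupp.single_zero, add_zero, MvPowerSeries.coeff_map, aux_deriv_shift] at this
      exact this
    have hd : p.derivative = 0 := Polynomial.eq_zero_of_infinite_isRoot _ hroots
    have hdeg : p.natDegree = 0 := Polynomial.natDegree_eq_zero_of_derivative_eq_zero hd
    have := Polynomial.eq_C_of_natDegree_eq_zero hdeg
    rw [this, h0 s] at *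
    simp at this; simp [this]

end
end

section
/- Let k be a field of characteristic zero, let r ≥ 1 be an integer, let a, b ≥ 1 with gcd(a, b) = 1, and let c, d ≥ 0. Let F ∈ k[z][[x,y]] be a formal power series in x and y whose coefficients are polynomials in z over k, and suppose that the coefficient of x^i y^j z^0 in F is zero whenever b(c + i) = a(d + j). Suppose that there are infinitely many α ∈ k such that, denoting by F_α the series obtained from F by substituting z + α for z, the coefficient of x^i y^j z^k in F_α is zero whenever i + j + k < r and in addition either k > 0 or b(c + i) ≠ a(d + j). Then the coefficient of x^i y^j z^k in F is zero for every (i, j, k) with i + j ≤ r − 1, except possibly for those with i + j = r − 1, b(c + i) = a(d + j) and k ≥ 1; equivalently, F = τ(z)·x^{i₀} y^{j₀} + Σ_{i+j≥r} a_{ij}(z)·x^i y^j, where (i₀, j₀), if it exists, is the unique pair of nonnegative integers with i₀ + j₀ = r − 1 and a(d + j₀) − b(c + i₀) = 0, and τ(z) has zero constant term. -/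
noncomputable section

open Polynomial

/-- Coefficient `0` of `P(X + α)` is `P(α)`. -/
lemma aux_coeff_zero_comp {k : Type*} [Field k] (P : k[X]) (α : k) :
    (aeval (X + C α) P).coeff 0 = P.eval α := by
  have : (aeval (X + C α) P) = P.comp (X + C α) := by
    simp [aeval_def, comp]
  rw [this]
  simp [coeff_zero_eq_eval_zero, eval_comp]

/-- Coefficient `1` of `P(X + α)` is `P'(α)`. -/
lemma aux_coeff_one_comp {k : Type*} [Field k] (P : k[X]) (α : k) :
    (aeval (X + C α) P).coeff 1 = (derivative P).eval α := by
  have hc : (aeval (X + C α) P) = P.comp (X + C α) := by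
    simp [aeval_def, comp]
  rw [hc]
  have h := coeff_derivative (P.comp (X + C α)) 0
  rw [derivative_comp] at h
  simp [coeff_zero_eq_eval_zero, eval_comp] at h
  simpa using h.symm

/-- In characteristic zero, a polynomial with vanishing derivative has vanishing
higher coefficients. -/
lemma aux_coeff_of_deriv_zero {k : Type*} [Field k] [CharZero k] (P : k[X])
    (h : derivative P = 0) (n : ℕ) (hn : 1 ≤ n) : P.coeff n = 0 := by
  have hd := coeff_derivative P (n - 1)
  rw [h] at hd
  have hn' : n - 1 + 1 = n := by omega
  rw [hn'] at hd
  simp at hd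
  rcases hd with h1 | h2
  · exact h1
  · exact absurd h2 (Nat.cast_add_one_ne_zero _)

/-- let `F ∈ k[z][[x,y]]` (a power series in `x, y` with coefficients which
are polynomials in `z`), normalized so that the `z`-constant part of the coefficient of
`x^i y^j` vanishes whenever `b(c+i) = a(d+j)`.  If for infinitely many `α ∈ k` the series
obtained by substituting `z + α` for `z` has vanishing `x^i y^j z^k`-coefficient whenever
`i + j + k < r` and moreover `k > 0` or `b(c+i) ≠ a(d+j)`, then the coefficient of
`x^i y^j z^k` in `F` vanishes for all `(i,j,k)` with `i + j ≤ r − 1` except possibly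
those with `i + j = r − 1`, `b(c+i) = a(d+j)` and `k ≥ 1`.  (Here the power series
variables are indexed by `0 ↦ x` and `1 ↦ y`.) -/
theorem two_point_form_along_two_curve
    (k : Type*) [Field k] [CharZero k]
    (r : ℕ) (hr : 1 ≤ r)
    (a b c d : ℕ) (ha : 1 ≤ a) (hb : 1 ≤ b) (hab : Nat.gcd a b = 1)
    (F : MvPowerSeries (Fin 2) (Polynomial k))
    (h0 : ∀ i j : ℕ, b * (c + i) = a * (d + j) →
      (MvPowerSeries.coeff (R := Polynomial k)
        (Finsupp.single 0 i + Finsupp.single 1 j) F).coeff 0 = 0)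
    (hinf : {α : k | ∀ i j kk : ℕ, i + j + kk < r →
      (0 < kk ∨ b * (c + i) ≠ a * (d + j)) →
      (MvPowerSeries.coeff (R := Polynomial k) (Finsupp.single 0 i + Finsupp.single 1 j)
        (MvPowerSeries.map (σ := Fin 2)
          ((Polynomial.aeval (R := k) (Polynomial.X + Polynomial.C α)).toRingHom)
          F)).coeff kk = 0}.Infinite) :
    ∀ i j kk : ℕ, i + j < r →
      ¬ (i + j + 1 = r ∧ b * (c + i) = a * (d + j) ∧ 1 ≤ kk) →
      (MvPowerSeries.coeff (R := Polynomial k)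
        (Finsupp.single 0 i + Finsupp.single 1 j) F).coeff kk = 0 := by
  intro i j kk hij hne
  set P : Polynomial k :=
    MvPowerSeries.coeff (R := Polynomial k) (Finsupp.single 0 i + Finsupp.single 1 j) F with hP
  -- coefficient of the mapped series is `aeval (X + C α) P`
  have hmap : ∀ α : k,
      (MvPowerSeries.coeff (R := Polynomial k) (Finsupp.single 0 i + Finsupp.single 1 j)
        (MvPowerSeries.map (σ := Fin 2)
          ((Polynomial.aeval (R := k) (Polynomial.X + Polynomial.C α)).toRingHom)
          F)) = aeval (X + C α) P := by
    intro α
    rw [MvPowerSeries.coeff_map]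
    rfl
  by_cases heq : b * (c + i) = a * (d + j)
  · -- equality case
    by_cases hlast : i + j + 1 = r
    · -- only kk = 0 is claimed
      have hkk : kk = 0 := by
        by_contra hk
        exact hne ⟨hlast, heq, by omega⟩
      rw [hkk]
      exact h0 i j heq
    · -- i + j + 1 < r : derivative of P vanishes on an infinite set
      have hlt : i + j + 1 < r := by omega
      rcases Nat.eq_zero_or_pos kk with hkk | hkk
      · rw [hkk]; exact h0 i j heq
      · have hroots : {α : k | (derivative P).eval α = 0}.Infinite := by
          apply Set.Infinite.mono _ hinf
          intro α hα
          have h1 := hα i j 1 (by omega) (Or.inl one_pos)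
          rw [hmap α, aux_coeff_one_comp] at h1
          exact h1
        have hd0 : derivative P = 0 :=
          eq_zero_of_infinite_isRoot _ hroots
        exact aux_coeff_of_deriv_zero P hd0 kk hkk
  · -- inequality case: P itself vanishes on an infinite set, hence P = 0
    have hroots : {α : k | P.eval α = 0}.Infinite := by
      apply Set.Infinite.mono _ hinf
      intro α hα
      have h1 := hα i j 0 (by omega) (Or.inr heq)
      rw [hmap α, aux_coeff_zero_comp] at h1
      exact h1
    have hP0 : P = 0 := eq_zero_of_infinite_isRoot _ hroots
    rw [hP0]
    simp

end
end

section
/- Let k be an algebraically closed field of characteristic zero, let A = k[[X,Y,Z]], and let u, v lie in the maximal ideal of A. Suppose (x, y, z) and (x₁, y₁, z₁) are two regular systems of parameters of A (triples of elements generating the maximal ideal) with u = x^a = x₁^a for some a ≥ 1, and suppose v is not a power series in x. Let v = P(x) + x^b F and v = P₁(x₁) + x₁^{b₁} F₁ be the normalized presentations of v with respect to the two coordinate systems: P(x) (resp. P₁(x₁)) collects all monomials of v that are powers of x (resp. of x₁) in the respective coordinates, and x^b (resp. x₁^{b₁}) is the largest power of x (resp. x₁) dividing the remainder, so that x does not divide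 F and F has no nonzero monomial that is a power of x (and similarly for F₁). Write F = Σ a_{ijk} x^i y^j z^k and F₁ = Σ a'_{ijk} x₁^i y₁^j z₁^k in the respective coordinates, and set r = ord(F). Then: (1) ord(F) = ord(F₁); (2) ord(F(0, y, z)) = ord(F₁(0, y₁, z₁)), where F(0, y, z) denotes the series obtained by setting x = 0 in the coordinate expansion of F; and (3) max{ j + k : a_{ijk} ≠ 0 and i + j + k = r } = max{ j + k : a'_{ijk} ≠ 0 and i + j + k = r }. -/
noncomputable section

/-- The order (minimal total degree of a monomial with nonzero coefficient) of a
three-variable formal power series, as an extended natural number. -/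
def ordm3 {k : Type*} [Field k] (F : MvPowerSeries (Fin 3) k) : ℕ∞ :=
  sInf {n : ℕ∞ | ∃ d : Fin 3 →₀ ℕ, MvPowerSeries.coeff d F ≠ 0 ∧
    n = ((d 0 + d 1 + d 2 : ℕ) : ℕ∞)}

/-- The series `F(0, y, z)` obtained by setting the first variable equal to `0`. -/
def restrictX0 {k : Type*} [Field k] (F : MvPowerSeries (Fin 3) k) :
    MvPowerSeries (Fin 3) k :=
  fun d => if d 0 = 0 then MvPowerSeries.coeff d F else 0

/-- The series `p(x)` in `k[[x,y,z]]` obtained from a one-variable power series `p`. -/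
def pevX {k : Type*} [Field k] (p : PowerSeries k) : MvPowerSeries (Fin 3) k :=
  fun d => if d 1 = 0 ∧ d 2 = 0 then PowerSeries.coeff (d 0) p else 0

/-- `F` has no nonzero monomial which is a power of `x`. -/
def NoPureXTerms3 {k : Type*} [Field k] (F : MvPowerSeries (Fin 3) k) : Prop :=
  ∀ d : Fin 3 →₀ ℕ, d 1 = 0 → d 2 = 0 → MvPowerSeries.coeff d F = 0

open MvPowerSeries Finsupp

namespace Stmt18

variable {k : Type*} [Field k]

/-- total degree of an exponent -/
abbrev deg (d : Fin 3 →₀ ℕ) : ℕ := d 0 + d 1 + d 2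

lemma fin3_ext {d e : Fin 3 →₀ ℕ} (h0 : d 0 = e 0) (h1 : d 1 = e 1) (h2 : d 2 = e 2) :
    d = e := by
  ext i; fin_cases i <;> assumption

lemma deg_add (p q : Fin 3 →₀ ℕ) : deg (p + q) = deg p + deg q := by
  simp only [deg, Finsupp.add_apply]; ring

lemma deg_eq_zero {d : Fin 3 →₀ ℕ} (h : deg d = 0) : d = 0 := by
  have h' : d 0 + d 1 + d 2 = 0 := h
  refine fin3_ext ?_ ?_ ?_ <;> simp only [Finsupp.coe_zero, Pi.zero_apply] <;> omega

lemma eq_single_of_pure {d : Fin 3 →₀ ℕ} (h1 : d 1 = 0) (h2 : d 2 = 0) :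
    d = Finsupp.single 0 (d 0) := by
  refine fin3_ext ?_ ?_ ?_
  · rw [Finsupp.single_eq_same]
  · rw [Finsupp.single_eq_of_ne' (by decide), h1]
  · rw [Finsupp.single_eq_of_ne' (by decide), h2]

lemma deg_single (i : Fin 3) (m : ℕ) : deg (Finsupp.single i m) = m := by
  fin_cases i <;>
    simp [deg, Finsupp.single_apply, show ((0:Fin 3) = 1) = False by simp,
      show ((0:Fin 3) = 2) = False by simp, show ((1:Fin 3) = 0) = False by simp,
      show ((1:Fin 3) = 2) = False by simp, show ((2:Fin 3) = 0) = False by simp,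
      show ((2:Fin 3) = 1) = False by simp]

lemma sub_single_apply (d : Fin 3 →₀ ℕ) (i j : Fin 3) (m : ℕ) (h : i ≠ j) :
    (d - Finsupp.single i m) j = d j := by
  rw [Finsupp.tsub_apply, Finsupp.single_eq_of_ne' h, Nat.sub_zero]

lemma coeff_X0_pow_mul (j : ℕ) (T : MvPowerSeries (Fin 3) k) (d : Fin 3 →₀ ℕ) :
    coeff d (X 0 ^ j * T) =
      if j ≤ d 0 then coeff (d - Finsupp.single 0 j) T else 0 := by
  rw [X_pow_eq, coeff_monomial_mul]
  simp [Finsupp.single_le_iff]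

lemma coeff_X_mul' (i : Fin 3) (T : MvPowerSeries (Fin 3) k) (d : Fin 3 →₀ ℕ) :
    coeff d (X i * T) =
      if 1 ≤ d i then coeff (d - Finsupp.single i 1) T else 0 := by
  rw [← pow_one (X i : MvPowerSeries (Fin 3) k), X_pow_eq, coeff_monomial_mul]
  simp [Finsupp.single_le_iff]

/-- all monomials have total degree at least `n` -/
def OrdGE (n : ℕ) (S : MvPowerSeries (Fin 3) k) : Prop :=
  ∀ d : Fin 3 →₀ ℕ, deg d < n → coeff d S = 0

lemma OrdGE.mono {m n : ℕ} (h : m ≤ n) {S : MvPowerSeries (Fin 3) k} (hS : OrdGE n S) :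
    OrdGE m S := fun d hd => hS d (lt_of_lt_of_le hd h)

lemma OrdGE.add {n : ℕ} {S T : MvPowerSeries (Fin 3) k} (hS : OrdGE n S) (hT : OrdGE n T) :
    OrdGE n (S + T) := fun d hd => by rw [map_add, hS d hd, hT d hd, add_zero]

lemma OrdGE.sub {n : ℕ} {S T : MvPowerSeries (Fin 3) k} (hS : OrdGE n S) (hT : OrdGE n T) :
    OrdGE n (S - T) := fun d hd => by rw [map_sub, hS d hd, hT d hd, sub_zero]

lemma OrdGE.mul {s t : ℕ} {S T : MvPowerSeries (Fin 3) k} (hS : OrdGE s S) (hT : OrdGE t T) :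
    OrdGE (s + t) (S * T) := by
  intro d hd
  rw [coeff_mul]
  refine Finset.sum_eq_zero fun p hp => ?_
  rw [Finset.HasAntidiagonal.mem_antidiagonal] at hp
  have hdeg : deg p.1 + deg p.2 = deg d := by rw [← deg_add, hp]
  rcases lt_or_ge (deg p.1) s with h | h
  · rw [hS p.1 h, zero_mul]
  · rw [hT p.2 (by omega), mul_zero]

lemma ordGE_one_of_const {S : MvPowerSeries (Fin 3) k}
    (h : constantCoeff S = 0) : OrdGE 1 S := by
  intro d hd
  have : d = 0 := deg_eq_zero (by omega)
  rw [this, coeff_zero_eq_constantCoeff_apply, h]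

lemma ordGE_Cmul {n : ℕ} (a : k) {S : MvPowerSeries (Fin 3) k} (hS : OrdGE n S) :
    OrdGE n (C a * S) := fun d hd => by
  rw [coeff_C_mul, hS d hd, mul_zero]

lemma ordGE_Cmul_iff {n : ℕ} {a : k} (ha : a ≠ 0) (S : MvPowerSeries (Fin 3) k) :
    OrdGE n (C a * S) ↔ OrdGE n S := by
  refine ⟨fun h d hd => ?_, ordGE_Cmul a⟩
  have := h d hd
  rw [coeff_C_mul] at this
  exact (mul_eq_zero.mp this).resolve_left ha

lemma exists_xpow_mul {j : ℕ} {S : MvPowerSeries (Fin 3) k}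
    (h : ∀ d : Fin 3 →₀ ℕ, coeff d S ≠ 0 → j ≤ d 0) :
    ∃ T, S = X 0 ^ j * T := by
  refine ⟨show MvPowerSeries (Fin 3) k from fun d => coeff (d + Finsupp.single 0 j) S, ?_⟩
  ext d
  rw [coeff_X0_pow_mul]
  by_cases hj : j ≤ d 0
  · rw [if_pos hj]
    show coeff d S = coeff (d - Finsupp.single 0 j + Finsupp.single 0 j) S
    have : d - Finsupp.single 0 j + Finsupp.single 0 j = d :=
      tsub_add_cancel_of_le (Finsupp.single_le_iff.mpr hj)
    rw [this]
  · rw [if_neg hj]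
    by_contra hc
    exact hj (h d (fun h0 => hc (h0 ▸ rfl)))

lemma split {n : ℕ} {S : MvPowerSeries (Fin 3) k} (h : OrdGE (n + 1) S) :
    ∃ S0 S1 S2 : MvPowerSeries (Fin 3) k, OrdGE n S0 ∧ OrdGE n S1 ∧ OrdGE n S2 ∧
      S = X 0 * S0 + X 1 * S1 + X 2 * S2 := by
  refine ⟨show MvPowerSeries (Fin 3) k from fun e => coeff (e + Finsupp.single 0 1) S,
    show MvPowerSeries (Fin 3) k from fun e => if e 0 = 0 then coeff (e + Finsupp.single 1 1) S else 0,
    show MvPowerSeries (Fin 3) k from fun e => if e 0 = 0 ∧ e 1 = 0 then coeff (e + Finsupp.single 2 1) S else 0,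
    ?_, ?_, ?_, ?_⟩
  · intro e he
    rw [coeff_apply]
    refine h _ ?_
    rw [deg_add, deg_single]; omega
  · intro e he
    rw [coeff_apply]
    split
    · refine h _ ?_
      rw [deg_add, deg_single]; omega
    · rfl
  · intro e he
    rw [coeff_apply]
    split
    · refine h _ ?_
      rw [deg_add, deg_single]; omega
    · rfl
  · ext d
    rw [map_add, map_add, coeff_X_mul', coeff_X_mul', coeff_X_mul']
    show coeff d S = ((if 1 ≤ d 0 then coeff (d - Finsupp.single 0 1 + Finsupp.single 0 1) S else 0) +
      (if 1 ≤ d 1 then (if (d - Finsupp.single 1 1 : Fin 3 →₀ ℕ) 0 = 0 then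
        coeff (d - Finsupp.single 1 1 + Finsupp.single 1 1) S else 0) else 0)) +
      (if 1 ≤ d 2 then (if (d - Finsupp.single 2 1 : Fin 3 →₀ ℕ) 0 = 0 ∧ (d - Finsupp.single 2 1 : Fin 3 →₀ ℕ) 1 = 0 then
        coeff (d - Finsupp.single 2 1 + Finsupp.single 2 1) S else 0) else 0)
    have e10 : ((d - Finsupp.single (1:Fin 3) 1 : Fin 3 →₀ ℕ)) 0 = d 0 := sub_single_apply d 1 0 1 (by decide)
    have e20 : ((d - Finsupp.single (2:Fin 3) 1 : Fin 3 →₀ ℕ)) 0 = d 0 := sub_single_apply d 2 0 1 (by decide)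
    have e21 : ((d - Finsupp.single (2:Fin 3) 1 : Fin 3 →₀ ℕ)) 1 = d 1 := sub_single_apply d 2 1 1 (by decide)
    rw [e10, e20, e21]
    by_cases h0 : 1 ≤ d 0
    · have hs0 : d - Finsupp.single 0 1 + Finsupp.single 0 1 = d :=
        tsub_add_cancel_of_le (Finsupp.single_le_iff.mpr h0)
      rw [if_pos h0, hs0, if_neg (show ¬ d 0 = 0 by omega),
        if_neg (show ¬ (d 0 = 0 ∧ d 1 = 0) by omega), ite_self, ite_self,
        add_zero, add_zero]
    · rw [if_neg h0]
      have hd0 : d 0 = 0 := by omega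
      by_cases h1 : 1 ≤ d 1
      · have hs1 : d - Finsupp.single 1 1 + Finsupp.single 1 1 = d :=
          tsub_add_cancel_of_le (Finsupp.single_le_iff.mpr h1)
        rw [if_pos h1, if_pos hd0, hs1, if_neg (show ¬ (d 0 = 0 ∧ d 1 = 0) by omega),
          ite_self, add_zero, zero_add]
      · rw [if_neg h1]
        have hd1 : d 1 = 0 := by omega
        by_cases h2 : 1 ≤ d 2
        · have hs2 : d - Finsupp.single 2 1 + Finsupp.single 2 1 = d :=
            tsub_add_cancel_of_le (Finsupp.single_le_iff.mpr h2)
          rw [if_pos h2, if_pos ⟨hd0, hd1⟩, hs2, add_zero, zero_add]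
        · rw [if_neg h2, add_zero, add_zero]
          have hd : d = 0 := deg_eq_zero (show d 0 + d 1 + d 2 = 0 by omega)
          subst hd
          exact h 0 (by simp [deg])

lemma map_C_eq (τ : MvPowerSeries (Fin 3) k ≃ₐ[k] MvPowerSeries (Fin 3) k) (a : k) :
    τ (C a) = C a := by
  rw [c_eq_algebraMap]; exact τ.commutes a

lemma constCoeff_map_zero (τ : MvPowerSeries (Fin 3) k ≃ₐ[k] MvPowerSeries (Fin 3) k)
    {S : MvPowerSeries (Fin 3) k} (hS : constantCoeff S = 0) :
    constantCoeff (τ S) = 0 := by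
  by_contra h
  have hu : IsUnit (τ S) := isUnit_iff_constantCoeff.mpr (isUnit_iff_ne_zero.mpr h)
  have hu2 : IsUnit S := by
    have := hu.map τ.symm.toAlgHom
    simpa using this
  rw [isUnit_iff_constantCoeff, hS] at hu2
  exact not_isUnit_zero hu2

lemma ordGE_map (τ : MvPowerSeries (Fin 3) k ≃ₐ[k] MvPowerSeries (Fin 3) k) :
    ∀ (n : ℕ) (S : MvPowerSeries (Fin 3) k), OrdGE n S → OrdGE n (τ S) := by
  intro n
  induction n with
  | zero => intro S _ d hd; omega
  | succ n ih =>
    intro S hS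
    obtain ⟨S0, S1, S2, h0, h1, h2, rfl⟩ := split hS
    have heq : τ (X 0 * S0 + X 1 * S1 + X 2 * S2) =
        τ (X 0) * τ S0 + τ (X 1) * τ S1 + τ (X 2) * τ S2 := by
      simp [map_add, map_mul]
    rw [heq]
    have hX : ∀ i : Fin 3, OrdGE 1 (τ (X i)) := fun i =>
      ordGE_one_of_const (constCoeff_map_zero τ (constantCoeff_X i))
    have m0 : OrdGE (n + 1) (τ (X 0) * τ S0) := by
      have := OrdGE.mul (hX 0) (ih S0 h0); rwa [add_comm 1 n] at this
    have m1 : OrdGE (n + 1) (τ (X 1) * τ S1) := by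
      have := OrdGE.mul (hX 1) (ih S1 h1); rwa [add_comm 1 n] at this
    have m2 : OrdGE (n + 1) (τ (X 2) * τ S2) := by
      have := OrdGE.mul (hX 2) (ih S2 h2); rwa [add_comm 1 n] at this
    exact (m0.add m1).add m2

/-! ### the `x = 0` restriction -/

lemma coeff_restrictX0 (S : MvPowerSeries (Fin 3) k) (d : Fin 3 →₀ ℕ) :
    coeff d (restrictX0 S) = if d 0 = 0 then coeff d S else 0 := rfl

lemma restrict_add (S T : MvPowerSeries (Fin 3) k) :
    restrictX0 (S + T) = restrictX0 S + restrictX0 T := by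
  ext d
  simp only [coeff_restrictX0, map_add]
  split <;> simp

lemma restrict_sub (S T : MvPowerSeries (Fin 3) k) :
    restrictX0 (S - T) = restrictX0 S - restrictX0 T := by
  ext d
  simp only [coeff_restrictX0, map_sub]
  split <;> simp

lemma restrict_mul (S T : MvPowerSeries (Fin 3) k) :
    restrictX0 (S * T) = restrictX0 S * restrictX0 T := by
  ext d
  rw [coeff_restrictX0, coeff_mul, coeff_mul]
  by_cases hd : d 0 = 0
  · rw [if_pos hd]
    refine Finset.sum_congr rfl fun p hp => ?_
    rw [Finset.HasAntidiagonal.mem_antidiagonal] at hp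
    have hp0 : p.1 0 = 0 ∧ p.2 0 = 0 := by
      have : p.1 0 + p.2 0 = d 0 := by rw [← Finsupp.add_apply, hp]
      omega
    rw [coeff_restrictX0, coeff_restrictX0, if_pos hp0.1, if_pos hp0.2]
  · rw [if_neg hd]
    refine (Finset.sum_eq_zero fun p hp => ?_).symm
    rw [Finset.HasAntidiagonal.mem_antidiagonal] at hp
    have : p.1 0 + p.2 0 = d 0 := by rw [← Finsupp.add_apply, hp]
    rcases Nat.eq_zero_or_pos (p.1 0) with h | h
    · rw [coeff_restrictX0 T, if_neg (by omega), mul_zero]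
    · rw [coeff_restrictX0 S, if_neg (by omega), zero_mul]

lemma restrict_idem (S : MvPowerSeries (Fin 3) k) :
    restrictX0 (restrictX0 S) = restrictX0 S := by
  ext d
  simp only [coeff_restrictX0]
  split <;> simp

lemma restrict_X0 : restrictX0 (X 0 : MvPowerSeries (Fin 3) k) = 0 := by
  ext d
  rw [coeff_restrictX0, coeff_X]
  split
  · split
    · next h1 h2 => exact absurd (h2 ▸ h1 : (Finsupp.single (0:Fin 3) 1) 0 = 0) (by simp)
    · rfl
  · simp

lemma restrict_pow (S : MvPowerSeries (Fin 3) k) (a : ℕ) (ha : 1 ≤ a) :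
    restrictX0 (S ^ a) = (restrictX0 S) ^ a := by
  induction a with
  | zero => omega
  | succ n ih =>
    rcases Nat.eq_zero_or_pos n with h | h
    · subst h; simp [pow_one]
    · rw [pow_succ, pow_succ, restrict_mul, ih h]

lemma restrict_X0_mul (S : MvPowerSeries (Fin 3) k) : restrictX0 (X 0 * S) = 0 := by
  rw [restrict_mul, restrict_X0, zero_mul]

lemma dvd_iff_restrict (S : MvPowerSeries (Fin 3) k) :
    X 0 ∣ S ↔ restrictX0 S = 0 := by
  constructor
  · rintro ⟨T, rfl⟩
    exact restrict_X0_mul T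
  · intro h
    have h' : ∀ d : Fin 3 →₀ ℕ, coeff d S ≠ 0 → 1 ≤ d 0 := by
      intro d hd
      by_contra hc
      have hd0 : d 0 = 0 := by omega
      have : coeff d (restrictX0 S) = coeff d S := by
        rw [coeff_restrictX0, if_pos hd0]
      rw [h] at this
      exact hd (by simpa using this.symm)
    obtain ⟨T, hT⟩ := exists_xpow_mul h'
    exact ⟨T, by rw [hT, pow_one]⟩

lemma restrict_ordGE {n : ℕ} {S : MvPowerSeries (Fin 3) k} (h : OrdGE n S) :
    OrdGE n (restrictX0 S) := by
  intro d hd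
  rw [coeff_restrictX0]
  split
  · exact h d hd
  · rfl

lemma restrict_comm (τ : MvPowerSeries (Fin 3) k ≃ₐ[k] MvPowerSeries (Fin 3) k) {ζ : k}
    (hτx : τ (X 0) = C ζ * X 0) (S : MvPowerSeries (Fin 3) k) :
    restrictX0 (τ S) = restrictX0 (τ (restrictX0 S)) := by
  have hsub : ∀ d : Fin 3 →₀ ℕ, coeff d (S - restrictX0 S) ≠ 0 → 1 ≤ d 0 := by
    intro d hd
    by_contra hc
    have hd0 : d 0 = 0 := by omega
    rw [map_sub, coeff_restrictX0, if_pos hd0, sub_self] at hd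
    exact hd rfl
  obtain ⟨T, hT⟩ := exists_xpow_mul hsub
  rw [pow_one] at hT
  have : τ S = τ (restrictX0 S) + C ζ * (X 0 * τ T) := by
    have h2 := congrArg τ hT
    rw [map_sub, map_mul, hτx] at h2
    have h3 : τ S = τ (restrictX0 S) + C ζ * X 0 * τ T := by
      rw [← h2]; ring
    rw [h3]; ring
  rw [this, restrict_add, restrict_mul, restrict_X0_mul, mul_zero, add_zero]


/-! ### pure-`x` series -/

/-- all monomials are powers of `x` -/
def PureX (S : MvPowerSeries (Fin 3) k) : Prop :=
  ∀ d : Fin 3 →₀ ℕ, ¬ (d 1 = 0 ∧ d 2 = 0) → coeff d S = 0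

/-- the pure-`x` part of a series -/
def purePart (S : MvPowerSeries (Fin 3) k) : MvPowerSeries (Fin 3) k :=
  fun d => if d 1 = 0 ∧ d 2 = 0 then coeff d S else 0

lemma coeff_purePart (S : MvPowerSeries (Fin 3) k) (d : Fin 3 →₀ ℕ) :
    coeff d (purePart S) = if d 1 = 0 ∧ d 2 = 0 then coeff d S else 0 := rfl

lemma pureX_purePart (S : MvPowerSeries (Fin 3) k) : PureX (purePart S) := by
  intro d hd
  rw [coeff_purePart, if_neg hd]

lemma noPure_sub_purePart (S : MvPowerSeries (Fin 3) k) :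
    NoPureXTerms3 (S - purePart S) := by
  intro d h1 h2
  rw [map_sub, coeff_purePart, if_pos ⟨h1, h2⟩, sub_self]

lemma purePart_ordGE {n : ℕ} {S : MvPowerSeries (Fin 3) k} (h : OrdGE n S) :
    OrdGE n (purePart S) := by
  intro d hd
  rw [coeff_purePart]
  split
  · exact h d hd
  · rfl

lemma pureX_pevX (p : PowerSeries k) : PureX (pevX p : MvPowerSeries (Fin 3) k) := by
  intro d hd
  show (if d 1 = 0 ∧ d 2 = 0 then _ else 0) = 0
  rw [if_neg hd]

lemma PureX.add {S T : MvPowerSeries (Fin 3) k} (hS : PureX S) (hT : PureX T) :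
    PureX (S + T) := fun d hd => by rw [map_add, hS d hd, hT d hd, add_zero]

lemma PureX.sub {S T : MvPowerSeries (Fin 3) k} (hS : PureX S) (hT : PureX T) :
    PureX (S - T) := fun d hd => by rw [map_sub, hS d hd, hT d hd, sub_zero]

lemma PureX.mul {S T : MvPowerSeries (Fin 3) k} (hS : PureX S) (hT : PureX T) :
    PureX (S * T) := by
  intro d hd
  rw [coeff_mul]
  refine Finset.sum_eq_zero fun p hp => ?_
  rw [Finset.HasAntidiagonal.mem_antidiagonal] at hp
  have h1 : p.1 1 + p.2 1 = d 1 := by rw [← Finsupp.add_apply, hp]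
  have h2 : p.1 2 + p.2 2 = d 2 := by rw [← Finsupp.add_apply, hp]
  by_cases hp1 : p.1 1 = 0 ∧ p.1 2 = 0
  · rw [hT p.2 (by omega), mul_zero]
  · rw [hS p.1 hp1, zero_mul]

lemma pureX_C (a : k) : PureX (C a) := by
  intro d hd
  rw [coeff_C]
  split
  · next h => exact absurd (by rw [h]; exact ⟨rfl, rfl⟩) hd
  · rfl

lemma pureX_X0pow (m : ℕ) : PureX ((X 0 : MvPowerSeries (Fin 3) k) ^ m) := by
  intro d hd
  rw [coeff_X_pow]
  split
  · next h =>
    refine absurd ?_ hd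
    rw [h]
    constructor <;> rw [Finsupp.single_eq_of_ne' (by decide)]
  · rfl

lemma noPure_sub {S T : MvPowerSeries (Fin 3) k} (hS : NoPureXTerms3 S)
    (hT : NoPureXTerms3 T) : NoPureXTerms3 (S - T) := fun d h1 h2 => by
  rw [map_sub, hS d h1 h2, hT d h1 h2, sub_zero]

lemma noPure_Cmul (a : k) {S : MvPowerSeries (Fin 3) k} (hS : NoPureXTerms3 S) :
    NoPureXTerms3 (C a * S) := fun d h1 h2 => by
  rw [coeff_C_mul, hS d h1 h2, mul_zero]

lemma noPure_xpow_mul (c : ℕ) {S : MvPowerSeries (Fin 3) k} (hS : NoPureXTerms3 S) :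
    NoPureXTerms3 (X 0 ^ c * S) := by
  intro d h1 h2
  rw [coeff_X0_pow_mul]
  split
  · refine hS _ ?_ ?_
    · rw [sub_single_apply d 0 1 c (by decide), h1]
    · rw [sub_single_apply d 0 2 c (by decide), h2]
  · rfl

/-- a series that is both pure-`x` and has no pure-`x` monomials is zero -/
lemma eq_zero_of_pure_noPure {S : MvPowerSeries (Fin 3) k} (h1 : PureX S)
    (h2 : NoPureXTerms3 S) : S = 0 := by
  ext d
  rw [map_zero]
  by_cases hd : d 1 = 0 ∧ d 2 = 0
  · exact h2 d hd.1 hd.2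
  · exact h1 d hd

/-- the image of a pure-`x` series under an automorphism scaling `x` is pure -/
lemma pureX_map (τ : MvPowerSeries (Fin 3) k ≃ₐ[k] MvPowerSeries (Fin 3) k) {ζ : k}
    (hτx : τ (X 0) = C ζ * X 0) {S : MvPowerSeries (Fin 3) k}
    (hS : PureX S) : PureX (τ S) := by
  intro d hd
  set n := d 0 + 1 with hn
  set Tr : MvPowerSeries (Fin 3) k :=
    ∑ m ∈ Finset.range n, C (coeff (Finsupp.single 0 m) S) * X 0 ^ m with hTr
  have hcTr : ∀ e : Fin 3 →₀ ℕ, coeff e Tr =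
      ∑ m ∈ Finset.range n,
        (coeff (Finsupp.single 0 m) S) * (if e = Finsupp.single 0 m then 1 else 0) := by
    intro e
    rw [hTr, map_sum]
    refine Finset.sum_congr rfl fun m _ => ?_
    rw [coeff_C_mul, coeff_X_pow]
  have hhi : ∀ e : Fin 3 →₀ ℕ, coeff e (S - Tr) ≠ 0 → n ≤ e 0 := by
    intro e he
    by_contra hc
    rw [map_sub] at he
    by_cases hpure : e 1 = 0 ∧ e 2 = 0
    · have hes : e = Finsupp.single 0 (e 0) := eq_single_of_pure hpure.1 hpure.2
      have : coeff e Tr = coeff e S := by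
        rw [hcTr]
        refine (Finset.sum_eq_single (e 0) (fun m _ hm => ?_) (fun hmem => ?_)).trans ?_
        · rw [if_neg, mul_zero]
          intro hem
          have hss : Finsupp.single (0 : Fin 3) (e 0) = Finsupp.single 0 m := by
            rw [← hes]; exact hem
          exact hm (Finsupp.single_injective 0 hss).symm
        · exact absurd (Finset.mem_range.mpr (by omega)) hmem
        · rw [if_pos hes, mul_one, ← hes]
      rw [this, sub_self] at he
      exact he rfl
    · have hz1 : coeff e S = 0 := hS e hpure
      have hz2 : coeff e Tr = 0 := by
        rw [hcTr]
        refine Finset.sum_eq_zero fun m _ => ?_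
        rw [if_neg, mul_zero]
        intro hem
        refine hpure ?_
        rw [hem]
        constructor <;> rw [Finsupp.single_eq_of_ne' (by decide)]
      rw [hz1, hz2, sub_self] at he
      exact he rfl
  obtain ⟨T, hT⟩ := exists_xpow_mul hhi
  have hSdec : τ S = τ Tr + C (ζ ^ n) * (X 0 ^ n * τ T) := by
    have h1 : S = Tr + X 0 ^ n * T := by rw [← hT]; ring
    rw [h1, map_add, map_mul, map_pow, hτx, mul_pow, ← map_pow]
    ring
  rw [hSdec, map_add]
  have hz1 : coeff d (τ Tr) = 0 := by
    rw [hTr, map_sum, map_sum]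
    refine Finset.sum_eq_zero fun m _ => ?_
    rw [map_mul, map_pow, hτx, map_C_eq, mul_pow, ← map_pow, ← mul_assoc, ← map_mul,
      coeff_C_mul, coeff_X_pow, if_neg, mul_zero]
    intro hdm
    refine hd ?_
    rw [hdm]
    constructor <;> rw [Finsupp.single_eq_of_ne' (by decide)]
  have hz2 : coeff d (C (ζ ^ n) * (X 0 ^ n * τ T)) = 0 := by
    rw [coeff_C_mul, coeff_X0_pow_mul, if_neg (by omega), mul_zero]
  rw [hz1, hz2, add_zero]


lemma X0_ne_zero : (X 0 : MvPowerSeries (Fin 3) k) ≠ 0 := by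
  intro h
  have := congrArg (coeff (Finsupp.single 0 1)) h
  rw [coeff_X, if_pos rfl, map_zero] at this
  exact one_ne_zero this

lemma C_ne_zero {a : k} (ha : a ≠ 0) : (C a : MvPowerSeries (Fin 3) k) ≠ 0 := by
  intro h
  have := congrArg (constantCoeff) h
  rw [constantCoeff_C, map_zero] at this
  exact ha this

/-- an automorphism fixing `x^a` scales `x` by a scalar -/
lemma tau_X0 [CharZero k] (τ : MvPowerSeries (Fin 3) k ≃ₐ[k] MvPowerSeries (Fin 3) k)
    (a : ℕ) (ha : 1 ≤ a) (h : τ (X 0 ^ a) = X 0 ^ a) :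
    ∃ ζ : k, ζ ≠ 0 ∧ τ (X 0) = C ζ * X 0 := by
  set t := τ (X 0) with htdef
  have ht : t ^ a = X 0 ^ a := by rw [htdef, ← map_pow, h]
  -- restriction of t is nilpotent hence zero
  have hπt : restrictX0 t = 0 := by
    have h1 : restrictX0 (t ^ a) = (restrictX0 t) ^ a := restrict_pow t a ha
    have h2 : restrictX0 ((X 0 : MvPowerSeries (Fin 3) k) ^ a) = 0 := by
      rw [restrict_pow _ a ha, restrict_X0, zero_pow (by omega)]
    rw [ht, h2] at h1
    exact pow_eq_zero_iff (by omega) |>.mp h1.symm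
  obtain ⟨w, hw⟩ := (dvd_iff_restrict t).mpr hπt
  have hwa : w ^ a = 1 := by
    have h1 : X 0 ^ a * w ^ a = X 0 ^ a * 1 := by
      rw [mul_one, ← mul_pow, ← hw, ht]
    exact mul_left_cancel₀ (pow_ne_zero a X0_ne_zero) h1
  set c := constantCoeff w with hcdef
  have hca : c ^ a = 1 := by
    rw [hcdef, ← map_pow, hwa, map_one]
  have hc0 : c ≠ 0 := by
    intro h0
    rw [h0, zero_pow (by omega)] at hca
    exact zero_ne_one hca
  set e := C c⁻¹ * w - 1 with hedef
  have hse : (1 + e : MvPowerSeries (Fin 3) k) = C c⁻¹ * w := by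
    rw [hedef]; ring
  have hsa : (1 + e : MvPowerSeries (Fin 3) k) ^ a = 1 := by
    rw [hse, mul_pow, ← map_pow, hwa, mul_one, inv_pow, hca, inv_one, map_one]
  have hgeom : (∑ i ∈ Finset.range a, (1 + e : MvPowerSeries (Fin 3) k) ^ i) * e = 0 := by
    have := geom_sum_mul (1 + e : MvPowerSeries (Fin 3) k) a
    rw [hsa, sub_self, add_sub_cancel_left] at this
    exact this
  have hconste : constantCoeff e = 0 := by
    rw [hedef, map_sub, map_mul, constantCoeff_C, map_one, ← hcdef,
      inv_mul_cancel₀ hc0, sub_self]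
  have hunit : IsUnit (∑ i ∈ Finset.range a, (1 + e : MvPowerSeries (Fin 3) k) ^ i) := by
    rw [isUnit_iff_constantCoeff]
    have : constantCoeff (∑ i ∈ Finset.range a, (1 + e : MvPowerSeries (Fin 3) k) ^ i)
        = (a : k) := by
      rw [map_sum]
      have : ∀ i ∈ Finset.range a,
          constantCoeff ((1 + e : MvPowerSeries (Fin 3) k) ^ i) = 1 := by
        intro i _
        rw [map_pow, map_add, map_one, hconste, add_zero, one_pow]
      rw [Finset.sum_congr rfl this, Finset.sum_const, Finset.card_range, nsmul_eq_mul, mul_one]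
    rw [this]
    exact isUnit_iff_ne_zero.mpr (Nat.cast_ne_zero.mpr (by omega))
  have he0 : e = 0 := by
    obtain ⟨uu, huu⟩ := hunit
    have : uu * e = uu * 0 := by rw [mul_zero, huu, hgeom]
    exact (Units.mul_right_inj uu).mp this
  have hwc : w = C c := by
    have h1 : C c⁻¹ * w = 1 := by
      rw [← hse, he0, add_zero]
    calc w = C c * (C c⁻¹ * w) := by
              rw [← mul_assoc, ← map_mul, mul_inv_cancel₀ hc0, map_one, one_mul]
      _ = C c := by rw [h1, mul_one]
  exact ⟨c, hc0, by show t = _; rw [hw, hwc, mul_comm]⟩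

/-! ### `ordm3` interface -/

lemma ordm3_spec {F : MvPowerSeries (Fin 3) k} {r : ℕ} (h : ordm3 F = (r : ℕ∞)) :
    OrdGE r F ∧ ∃ d : Fin 3 →₀ ℕ, coeff d F ≠ 0 ∧ deg d = r := by
  have hlow : ∀ d : Fin 3 →₀ ℕ, coeff d F ≠ 0 → (r : ℕ∞) ≤ ((deg d : ℕ) : ℕ∞) := by
    intro d hd
    rw [← h]
    exact sInf_le ⟨d, hd, rfl⟩
  constructor
  · intro d hd
    by_contra hc
    exact absurd (hlow d hc) (not_le.mpr (by exact_mod_cast hd))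
  · have hlt : ordm3 F < ((r + 1 : ℕ) : ℕ∞) := by
      rw [h]; exact_mod_cast Nat.lt_succ_self r
    obtain ⟨c, hc, hlt'⟩ := sInf_lt_iff.mp hlt
    obtain ⟨d, hd, rfl⟩ := hc
    refine ⟨d, hd, ?_⟩
    have h1 := Nat.cast_le.mp (hlow d hd)
    have h2 := Nat.cast_lt.mp hlt'
    have h3 : deg d = d 0 + d 1 + d 2 := rfl
    omega

lemma ordm3_eq {F : MvPowerSeries (Fin 3) k} {r : ℕ} (h1 : OrdGE r F) (d : Fin 3 →₀ ℕ)
    (hd : coeff d F ≠ 0) (hdeg : deg d = r) : ordm3 F = (r : ℕ∞) := by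
  refine le_antisymm (sInf_le ⟨d, hd, by rw [show d 0 + d 1 + d 2 = r from hdeg]⟩) (le_sInf ?_)
  rintro c ⟨e, he, rfl⟩
  have : r ≤ deg e := by
    by_contra hh
    exact he (h1 e (by omega))
  exact_mod_cast this

lemma ordm3_congr {F G : MvPowerSeries (Fin 3) k} (h : ∀ n, OrdGE n F ↔ OrdGE n G) :
    ordm3 F = ordm3 G := by
  by_cases hGtop : ordm3 G = ⊤
  · have hGzero : ∀ d : Fin 3 →₀ ℕ, coeff d G = 0 := by
      intro d
      by_contra hd
      have : ordm3 G ≤ ((deg d : ℕ) : ℕ∞) := sInf_le ⟨d, hd, rfl⟩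
      rw [hGtop, top_le_iff] at this
      exact (WithTop.coe_ne_top (a := (deg d : ℕ))) this
    have hFzero : ∀ d : Fin 3 →₀ ℕ, coeff d F = 0 := by
      intro d
      exact ((h (deg d + 1)).mpr (fun e _ => hGzero e)) d (by omega)
    rw [hGtop]
    have : {n : ℕ∞ | ∃ d : Fin 3 →₀ ℕ, MvPowerSeries.coeff d F ≠ 0 ∧
        n = ((d 0 + d 1 + d 2 : ℕ) : ℕ∞)} = ∅ := by
      ext c
      simp only [Set.mem_setOf_eq, Set.mem_empty_iff_false, iff_false, not_exists]
      intro d hd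
      exact absurd (hFzero d) hd.1
    rw [ordm3, this, sInf_empty]
  · obtain ⟨r, hr⟩ := WithTop.ne_top_iff_exists.mp hGtop
    replace hr := hr.symm
    obtain ⟨h1, d, hd, hdeg⟩ := ordm3_spec hr
    have h1' : OrdGE r F := (h r).mpr h1
    have hnot : ¬ OrdGE (r + 1) F := by
      intro hF
      exact hd (((h (r + 1)).mp hF) d (by omega))
    simp only [OrdGE] at hnot
    push_neg at hnot
    obtain ⟨d', hlt', hne'⟩ := hnot
    have hdeg' : deg d' = r := by
      rcases Nat.lt_or_ge (deg d') r with hlt | hge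
      · exact absurd (h1' d' hlt) hne'
      · have h3 : deg d' = d' 0 + d' 1 + d' 2 := rfl
        omega
    rw [hr, ordm3_eq h1' d' hne' hdeg']
    norm_cast


/-! ### the `τ`-invariant machinery -/

/-- every degree-`r` monomial has `(y,z)`-degree at most `m` -/
def Tle (r : ℕ) (S : MvPowerSeries (Fin 3) k) (m : ℕ) : Prop :=
  ∀ d : Fin 3 →₀ ℕ, coeff d S ≠ 0 → deg d = r → d 1 + d 2 ≤ m

lemma tle_of_decomp {r m j : ℕ} (hj : j = r - m) {S Sb H : MvPowerSeries (Fin 3) k}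
    (hS : S = X 0 ^ j * Sb + H) (hH : OrdGE (r + 1) H) : Tle r S m := by
  intro d hd hdeg
  have hH0 : coeff d H = 0 := hH d (by omega)
  rw [hS, map_add, hH0, add_zero, coeff_X0_pow_mul] at hd
  have hj' : j ≤ d 0 := by
    by_contra hc
    rw [if_neg hc] at hd
    exact hd rfl
  have hglue : deg d = d 0 + d 1 + d 2 := rfl
  omega

lemma decomp_of_tle {r m : ℕ} {S : MvPowerSeries (Fin 3) k} (hord : OrdGE r S)
    (h : Tle r S m) :
    ∃ Sb H : MvPowerSeries (Fin 3) k, S = X 0 ^ (r - m) * Sb + H ∧ OrdGE (r + 1) H := by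
  classical
  set H : MvPowerSeries (Fin 3) k :=
    fun d => if r < deg d ∧ d 0 < r - m then coeff d S else 0 with hHdef
  have hcH : ∀ d : Fin 3 →₀ ℕ, coeff d H =
      if r < deg d ∧ d 0 < r - m then coeff d S else 0 := fun d => rfl
  have hordH : OrdGE (r + 1) H := by
    intro d hd
    rw [hcH, if_neg]
    rintro ⟨h1, -⟩
    omega
  have hdvd : ∀ d : Fin 3 →₀ ℕ, coeff d (S - H) ≠ 0 → r - m ≤ d 0 := by
    intro d hd
    rw [map_sub, hcH] at hd
    by_contra hc
    rcases Nat.lt_trichotomy (deg d) r with hlt | heq | hgt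
    · rw [hord d hlt, if_neg (by omega), sub_zero] at hd
      exact hd rfl
    · rw [if_neg (by omega), sub_zero] at hd
      have hb := h d hd heq
      have hglue : deg d = d 0 + d 1 + d 2 := rfl
      omega
    · rw [if_pos ⟨hgt, by omega⟩, sub_self] at hd
      exact hd rfl
  obtain ⟨Sb, hSb⟩ := exists_xpow_mul hdvd
  exact ⟨Sb, H, by rw [← hSb]; ring, hordH⟩

lemma xpow_cancel {b b' : ℕ} {F G : MvPowerSeries (Fin 3) k}
    (h : X 0 ^ b' * F = X 0 ^ b * G) (hF : ¬ X 0 ∣ F) (hG : ¬ X 0 ∣ G) :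
    b' = b ∧ F = G := by
  rcases le_total b' b with hle | hle
  · obtain ⟨c, rfl⟩ := Nat.exists_eq_add_of_le hle
    rw [pow_add, mul_assoc] at h
    have h2 := mul_left_cancel₀ (pow_ne_zero b' X0_ne_zero) h
    rcases Nat.eq_zero_or_pos c with h0 | h0
    · subst h0
      rw [pow_zero, one_mul] at h2
      exact ⟨by omega, h2⟩
    · exfalso
      have hc' : (X 0 : MvPowerSeries (Fin 3) k) ^ c = X 0 * X 0 ^ (c - 1) := by
        rw [← pow_succ']
        congr 1
        omega
      refine hF ⟨X 0 ^ (c - 1) * G, ?_⟩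
      rw [h2, hc', mul_assoc]
  · obtain ⟨c, rfl⟩ := Nat.exists_eq_add_of_le hle
    rw [pow_add, mul_assoc] at h
    have h2 := mul_left_cancel₀ (pow_ne_zero b X0_ne_zero) h.symm
    rcases Nat.eq_zero_or_pos c with h0 | h0
    · subst h0
      rw [pow_zero, one_mul] at h2
      exact ⟨by omega, h2.symm⟩
    · exfalso
      have hc' : (X 0 : MvPowerSeries (Fin 3) k) ^ c = X 0 * X 0 ^ (c - 1) := by
        rw [← pow_succ']
        congr 1
        omega
      refine hG ⟨X 0 ^ (c - 1) * F, ?_⟩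
      rw [h2, hc', mul_assoc]

lemma restrict_C (a : k) : restrictX0 (C a) = C a := by
  ext d
  rw [coeff_restrictX0]
  split
  · rfl
  · next hd =>
    rw [coeff_C, if_neg]
    intro h0
    exact hd (by rw [h0]; rfl)

end Stmt18

open MvPowerSeries Stmt18

/-- for `u = x^a` at a 1-point of `k[[X,Y,Z]]`, the invariants
`ν = ord F`, `γ = ord F(0,y,z)` and `τ = max{j+k : a certain coefficient a_{ijk} ≠ 0,
i+j+k = ord F}` of a normalized presentation `v = P(x) + x^b F` do not depend on the
choice of the coordinate system; coordinate systems are encoded by automorphisms of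
`k[[X,Y,Z]]` carrying `(u,v)` to the indicated normal forms in the standard
coordinates. -/
theorem invariants_of_one_point_presentation_well_defined
    (k : Type*) [Field k] [IsAlgClosed k] [CharZero k]
    (u v : MvPowerSeries (Fin 3) k)
    (hu : u ∈ IsLocalRing.maximalIdeal (MvPowerSeries (Fin 3) k))
    (hv : v ∈ IsLocalRing.maximalIdeal (MvPowerSeries (Fin 3) k))
    (a : ℕ) (ha : 1 ≤ a)
    (σ σ' : MvPowerSeries (Fin 3) k ≃ₐ[k] MvPowerSeries (Fin 3) k)
    (hσu : σ u = MvPowerSeries.X 0 ^ a)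
    (hσ'u : σ' u = MvPowerSeries.X 0 ^ a)
    (hvnot : ¬ ∃ p : PowerSeries k, σ v = pevX p)
    (P P' : PowerSeries k) (b b' : ℕ) (F F' : MvPowerSeries (Fin 3) k)
    (hform : σ v = pevX P + MvPowerSeries.X 0 ^ b * F)
    (hFx : ¬ MvPowerSeries.X 0 ∣ F) (hFnorm : NoPureXTerms3 F)
    (hform' : σ' v = pevX P' + MvPowerSeries.X 0 ^ b' * F')
    (hF'x : ¬ MvPowerSeries.X 0 ∣ F') (hF'norm : NoPureXTerms3 F')
    (r : ℕ) (hr : ordm3 F = (r : ℕ∞)) :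
    ordm3 F = ordm3 F' ∧
    ordm3 (restrictX0 F) = ordm3 (restrictX0 F') ∧
    sSup {m : ℕ | ∃ d : Fin 3 →₀ ℕ, MvPowerSeries.coeff d F ≠ 0 ∧
        d 0 + d 1 + d 2 = r ∧ d 1 + d 2 = m} =
      sSup {m : ℕ | ∃ d : Fin 3 →₀ ℕ, MvPowerSeries.coeff d F' ≠ 0 ∧
        d 0 + d 1 + d 2 = r ∧ d 1 + d 2 = m} := by
  classical
  obtain ⟨hordF, d₀, hd₀, hdeg₀⟩ := ordm3_spec hr
  set τ := σ.symm.trans σ' with hτdef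
  have hτv : τ (σ v) = σ' v := by
    rw [hτdef]
    simp [AlgEquiv.trans_apply]
  have hτu : τ (X 0 ^ a) = X 0 ^ a := by
    rw [hτdef]
    have h1 : σ.symm (X 0 ^ a) = u := by rw [← hσu, AlgEquiv.symm_apply_apply]
    simp [AlgEquiv.trans_apply, h1, hσ'u]
  obtain ⟨ζ, hζ0, hτx⟩ := tau_X0 τ a ha hτu
  have hτx' : τ.symm (X 0) = C ζ⁻¹ * X 0 := by
    have h1 : τ.symm (C ζ * X 0) = X 0 := by
      rw [← hτx, AlgEquiv.symm_apply_apply]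
    rw [map_mul, map_C_eq τ.symm] at h1
    calc τ.symm (X 0)
        = C ζ⁻¹ * (C ζ * τ.symm (X 0)) := by
          rw [← mul_assoc, ← map_mul, inv_mul_cancel₀ hζ0, map_one, one_mul]
      _ = C ζ⁻¹ * X 0 := by rw [h1]
  set Q := purePart (τ F) with hQdef
  set G := C (ζ ^ b) * (τ F - Q) with hGdef
  set S₀ := τ (pevX P) + C (ζ ^ b) * X 0 ^ b * Q with hS₀def
  have hformτ : σ' v = S₀ + X 0 ^ b * G := by
    rw [← hτv, hform, map_add, map_mul, map_pow, hτx, mul_pow, ← map_pow, hS₀def, hGdef]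
    ring
  have hS₀pure : PureX S₀ := by
    refine PureX.add (pureX_map τ hτx (pureX_pevX P)) ?_
    exact ((pureX_C _).mul (pureX_X0pow b)).mul (pureX_purePart _)
  have hGnp : NoPureXTerms3 G := noPure_Cmul _ (noPure_sub_purePart (τ F))
  have hπQ : restrictX0 Q = 0 := by
    have hFc : constantCoeff F = 0 := by
      have := hFnorm 0 rfl rfl
      rwa [coeff_zero_eq_constantCoeff_apply] at this
    have hτFc : constantCoeff (τ F) = 0 := constCoeff_map_zero τ hFc
    ext d
    have hz : coeff d (0 : MvPowerSeries (Fin 3) k) = 0 := map_zero _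
    rw [hz, coeff_restrictX0]
    split
    · next hd0 =>
      rw [hQdef, coeff_purePart]
      split
      · next hp =>
        have hd00 : d = 0 := by
          have h1 := eq_single_of_pure hp.1 hp.2
          rw [hd0] at h1
          simpa using h1
        rw [hd00, coeff_zero_eq_constantCoeff_apply, hτFc]
      · rfl
    · rfl
  have hπG : restrictX0 G = C (ζ ^ b) * restrictX0 (τ (restrictX0 F)) := by
    rw [hGdef, restrict_mul, restrict_sub, hπQ, sub_zero, restrict_comm τ hτx, restrict_C]
  have hGx : ¬ X 0 ∣ G := by
    intro hdvd
    rw [dvd_iff_restrict, hπG] at hdvd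
    have h1 : restrictX0 (τ (restrictX0 F)) = 0 := by
      rcases mul_eq_zero.mp hdvd with h | h
      · exact absurd h (C_ne_zero (pow_ne_zero b hζ0))
      · exact h
    obtain ⟨T, hT⟩ := (dvd_iff_restrict _).mpr h1
    have h3 : restrictX0 F = C ζ⁻¹ * X 0 * τ.symm T := by
      have h2 := congrArg τ.symm hT
      rw [AlgEquiv.symm_apply_apply, map_mul, hτx'] at h2
      exact h2
    have h4 : X 0 ∣ restrictX0 F := ⟨C ζ⁻¹ * τ.symm T, by rw [h3]; ring⟩
    rw [dvd_iff_restrict, restrict_idem] at h4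
    exact hFx ((dvd_iff_restrict F).mpr h4)
  have hkey : X 0 ^ b' * F' = X 0 ^ b * G := by
    have heq := hform'.symm.trans hformτ
    have hD : pevX P' - S₀ = X 0 ^ b * G - X 0 ^ b' * F' := by
      linear_combination heq
    have hzero : pevX P' - S₀ = 0 := by
      refine eq_zero_of_pure_noPure ((pureX_pevX P').sub hS₀pure) ?_
      rw [hD]
      exact noPure_sub (noPure_xpow_mul b hGnp) (noPure_xpow_mul b' hF'norm)
    have h5 : X 0 ^ b * G - X 0 ^ b' * F' = 0 := by rw [← hD, hzero]
    exact (sub_eq_zero.mp h5).symm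
  obtain ⟨hb, hFG⟩ := xpow_cancel hkey hF'x hGx
  -- part 1
  have hordτF : OrdGE r (τ F) := ordGE_map τ r F hordF
  have hordG : OrdGE r G := by
    rw [hGdef]
    exact ordGE_Cmul _ (hordτF.sub (purePart_ordGE hordτF))
  have hordF' : OrdGE r F' := by rw [hFG]; exact hordG
  have hd₀np : ¬ (d₀ 1 = 0 ∧ d₀ 2 = 0) := fun hp => hd₀ (hFnorm d₀ hp.1 hp.2)
  have hnot : ¬ OrdGE (r + 1) F' := by
    intro hc
    have h1 : τ F = C (ζ ^ b)⁻¹ * F' + Q := by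
      rw [hFG, hGdef, ← mul_assoc, ← map_mul, inv_mul_cancel₀ (pow_ne_zero b hζ0), map_one,
        one_mul]
      ring
    have hFeq : F = C (ζ ^ b)⁻¹ * τ.symm F' + τ.symm Q := by
      have h2 := congrArg τ.symm h1
      rw [AlgEquiv.symm_apply_apply, map_add, map_mul, map_C_eq τ.symm] at h2
      exact h2
    have hc1 : coeff d₀ (C (ζ ^ b)⁻¹ * τ.symm F') = 0 := by
      rw [coeff_C_mul, ordGE_map τ.symm (r + 1) F' hc d₀ (by omega), mul_zero]
    have hc2 : coeff d₀ (τ.symm Q) = 0 :=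
      pureX_map τ.symm hτx' (pureX_purePart (τ F)) d₀ hd₀np
    rw [hFeq, map_add, hc1, hc2, add_zero] at hd₀
    exact hd₀ rfl
  have hF'r : ordm3 F' = (r : ℕ∞) := by
    simp only [OrdGE] at hnot
    push_neg at hnot
    obtain ⟨d₁, hd₁lt, hd₁ne⟩ := hnot
    have hdeg₁ : deg d₁ = r := by
      rcases Nat.lt_or_ge (deg d₁) r with hlt | hge
      · exact absurd (hordF' d₁ hlt) hd₁ne
      · omega
    exact ordm3_eq hordF' d₁ hd₁ne hdeg₁
  refine ⟨by rw [hr, hF'r], ?_, ?_⟩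
  -- part 2
  · have hπF' : restrictX0 F' = C (ζ ^ b) * restrictX0 (τ (restrictX0 F)) := by
      rw [hFG]; exact hπG
    refine ordm3_congr fun n => ?_
    constructor
    · intro hW
      rw [hπF']
      exact ordGE_Cmul _ (restrict_ordGE (ordGE_map τ n _ hW))
    · intro hW
      have h1 : OrdGE n (restrictX0 (τ (restrictX0 F))) := by
        rw [hπF'] at hW
        exact (ordGE_Cmul_iff (pow_ne_zero b hζ0) _).mp hW
      have h2 : OrdGE n (restrictX0 (τ.symm (restrictX0 (τ (restrictX0 F))))) :=
        restrict_ordGE (ordGE_map τ.symm n _ h1)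
      have h3 : restrictX0 (τ.symm (restrictX0 (τ (restrictX0 F)))) = restrictX0 F := by
        rw [← restrict_comm τ.symm hτx' (τ (restrictX0 F)), AlgEquiv.symm_apply_apply,
          restrict_idem]
      rwa [h3] at h2
  -- part 3
  · have hcF' : ∀ d : Fin 3 →₀ ℕ, ¬ (d 1 = 0 ∧ d 2 = 0) →
        coeff d F' = ζ ^ b * coeff d (τ F) := by
      intro d hd
      rw [hFG, hGdef, coeff_C_mul, map_sub, hQdef, coeff_purePart, if_neg hd, sub_zero]
    have hcF'p : ∀ d : Fin 3 →₀ ℕ, d 1 = 0 ∧ d 2 = 0 → coeff d F' = 0 := by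
      intro d hd
      rw [hFG]
      exact hGnp d hd.1 hd.2
    have htle : ∀ m, Tle r F m ↔ Tle r F' m := by
      intro m
      constructor
      · intro hT
        obtain ⟨Sb, H, hdec, hHord⟩ := decomp_of_tle hordF hT
        have hτdec : τ F = X 0 ^ (r - m) * (C (ζ ^ (r - m)) * τ Sb) + τ H := by
          rw [hdec, map_add, map_mul, map_pow, hτx, mul_pow, ← map_pow]
          ring
        have hTτ : Tle r (τ F) m := tle_of_decomp rfl hτdec (ordGE_map τ (r + 1) H hHord)
        intro d hd hdeg
        by_cases hp : d 1 = 0 ∧ d 2 = 0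
        · exact absurd (hcF'p d hp) hd
        · refine hTτ d ?_ hdeg
          intro hz
          rw [hcF' d hp, hz, mul_zero] at hd
          exact hd rfl
      · intro hT
        have hTτ : Tle r (τ F) m := by
          intro d hd hdeg
          by_cases hp : d 1 = 0 ∧ d 2 = 0
          · omega
          · refine hT d ?_ hdeg
            rw [hcF' d hp]
            exact mul_ne_zero (pow_ne_zero b hζ0) hd
        obtain ⟨Sb, H, hdec, hHord⟩ := decomp_of_tle hordτF hTτ
        have hFdec : F = X 0 ^ (r - m) * (C (ζ⁻¹ ^ (r - m)) * τ.symm Sb) + τ.symm H := by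
          have h2 := congrArg τ.symm hdec
          rw [AlgEquiv.symm_apply_apply, map_add, map_mul, map_pow, hτx', mul_pow,
            ← map_pow] at h2
          rw [h2]
          ring
        exact tle_of_decomp rfl hFdec (ordGE_map τ.symm (r + 1) H hHord)
    have hbF : BddAbove {m : ℕ | ∃ d : Fin 3 →₀ ℕ, MvPowerSeries.coeff d F ≠ 0 ∧
        d 0 + d 1 + d 2 = r ∧ d 1 + d 2 = m} := by
      refine ⟨r, fun m hm => ?_⟩
      obtain ⟨d, -, h1, h2⟩ := hm
      omega
    have hbF' : BddAbove {m : ℕ | ∃ d : Fin 3 →₀ ℕ, MvPowerSeries.coeff d F' ≠ 0 ∧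
        d 0 + d 1 + d 2 = r ∧ d 1 + d 2 = m} := by
      refine ⟨r, fun m hm => ?_⟩
      obtain ⟨d, -, h1, h2⟩ := hm
      omega
    have hTF : Tle r F (sSup {m : ℕ | ∃ d : Fin 3 →₀ ℕ, MvPowerSeries.coeff d F ≠ 0 ∧
        d 0 + d 1 + d 2 = r ∧ d 1 + d 2 = m}) := fun d hd hdeg =>
      le_csSup hbF ⟨d, hd, hdeg, rfl⟩
    have hTF' : Tle r F' (sSup {m : ℕ | ∃ d : Fin 3 →₀ ℕ, MvPowerSeries.coeff d F' ≠ 0 ∧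
        d 0 + d 1 + d 2 = r ∧ d 1 + d 2 = m}) := fun d hd hdeg =>
      le_csSup hbF' ⟨d, hd, hdeg, rfl⟩
    apply le_antisymm
    · rcases Set.eq_empty_or_nonempty {m : ℕ | ∃ d : Fin 3 →₀ ℕ,
          MvPowerSeries.coeff d F ≠ 0 ∧ d 0 + d 1 + d 2 = r ∧ d 1 + d 2 = m} with he | hne
      · rw [he, csSup_empty]
        exact bot_le
      · refine csSup_le hne fun m hm => ?_
        obtain ⟨d, hd1, hd2, hd3⟩ := hm
        have := ((htle _).mpr hTF') d hd1 hd2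
        omega
    · rcases Set.eq_empty_or_nonempty {m : ℕ | ∃ d : Fin 3 →₀ ℕ,
          MvPowerSeries.coeff d F' ≠ 0 ∧ d 0 + d 1 + d 2 = r ∧ d 1 + d 2 = m} with he | hne
      · rw [he, csSup_empty]
        exact bot_le
      · refine csSup_le hne fun m hm => ?_
        obtain ⟨d, hd1, hd2, hd3⟩ := hm
        have := ((htle _).mp hTF) d hd1 hd2
        omega

end
end
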